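/- arXiv:1307.2834 — 4 statements merged into one kernel-verified Lean document; each statement's English description precedes it below -/
import Mathlib

section
/- For every integer N ≥ 2, lim_{s → ∞} ( v_s(N) + 1/s )^{-1/s} = ρ(N), where ρ(N) is the best-packing distance of N points on S². -/
open scoped BigOperators

/-- The standardized Riesz pair-energy `V_s(r) = (r^{-s} - 1)/s` for `s ≠ 0`,
and `V_0(r) = -log r`. -/
noncomputable def Vpair (s r : ℝ) : ℝ := if s = 0 then -Real.log r else (r ^ (-s) - 1) / s

/-- The average standardized Riesz pair-energy of an `N`-point configuration on the
unit sphere `S² ⊂ ℝ³`. -/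
noncomputable def avgE (s : ℝ) (N : ℕ) (q : Fin N → EuclideanSpace ℝ (Fin 3)) : ℝ :=
  2 / ((N : ℝ) * ((N : ℝ) - 1)) *
    ∑ i : Fin N, ∑ j : Fin N, if i < j then Vpair s ‖q i - q j‖ else 0

/-- The minimal average standardized Riesz pair-energy `v_s(N)`: the infimum of the
average pair-energy over all configurations of `N` pairwise distinct points on `S²`. -/
noncomputable def vmin (s : ℝ) (N : ℕ) : ℝ :=
  sInf { E : ℝ | ∃ q : Fin N → EuclideanSpace ℝ (Fin 3),
    (∀ i, ‖q i‖ = 1) ∧ Function.Injective q ∧ E = avgE s N q }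

/-- The separation distance of a configuration: the minimal pairwise distance. -/
noncomputable def sep (N : ℕ) (q : Fin N → EuclideanSpace ℝ (Fin 3)) : ℝ :=
  sInf { d : ℝ | ∃ i j : Fin N, i < j ∧ d = ‖q i - q j‖ }

/-- The best-packing distance `ρ(N)` of `N` points on `S²`. -/
noncomputable def bestPacking (N : ℕ) : ℝ :=
  sSup { d : ℝ | ∃ q : Fin N → EuclideanSpace ℝ (Fin 3),
    (∀ i, ‖q i‖ = 1) ∧ Function.Injective q ∧ d = sep N q }

open Filter Real Set Finset

noncomputable def circQ (N : ℕ) : Fin N → EuclideanSpace ℝ (Fin 3) :=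
  fun k => (WithLp.equiv 2 (Fin 3 → ℝ)).symm
    ![Real.cos (k * Real.pi / N), Real.sin (k * Real.pi / N), 0]

lemma circQ_norm (N : ℕ) (k : Fin N) : ‖circQ N k‖ = 1 := by
  rw [EuclideanSpace.norm_eq]
  simp only [circQ, WithLp.equiv_symm_apply, WithLp.ofLp_toLp, Fin.sum_univ_three,
    Matrix.cons_val_zero, Matrix.cons_val_one, Matrix.head_cons,
    Matrix.cons_val_two, Matrix.tail_cons, Real.norm_eq_abs, sq_abs]
  rw [Real.cos_sq_add_sin_sq]
  norm_num
  
lemma circQ_inj (N : ℕ) (hN : 0 < N) : Function.Injective (circQ N) := by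
  intro k l h
  have h0 : Real.cos (k * Real.pi / N) = Real.cos (l * Real.pi / N) := by
    have := congrArg (fun v => v 0) h
    simpa [circQ, WithLp.equiv_symm_apply] using this
  have hmem : ∀ m : Fin N, (m : ℝ) * Real.pi / N ∈ Set.Icc 0 Real.pi := by
    intro m
    constructor
    · positivity
    · rw [div_le_iff₀ (by positivity)]
      have : (m : ℝ) ≤ N := by exact_mod_cast (m.2.le)
      nlinarith [Real.pi_pos]
  have := Real.injOn_cos (hmem k) (hmem l) h0
  have hNe : (N : ℝ) ≠ 0 := by positivity
  have hkl : ((k:ℕ) : ℝ) = ((l:ℕ) : ℝ) := by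
    rw [div_left_inj' hNe, mul_left_inj' Real.pi_ne_zero] at this
    exact this
  exact Fin.ext (by exact_mod_cast hkl)

lemma pair_count (N : ℕ) :
    (∑ i : Fin N, ∑ j : Fin N, if i < j then (1:ℝ) else 0) = N * (N - 1) / 2 := by
  have h1 : ∀ i j : Fin N, ((if i < j then (1:ℝ) else 0) + (if j < i then 1 else 0))
      + (if i = j then 1 else 0) = 1 := by
    intro i j
    rcases lt_trichotomy i j with h | rfl | h
    · simp [h, h.asymm, h.ne]
    · simp
    · simp [h, h.asymm, h.ne']
  have h2 : (∑ i : Fin N, ∑ j : Fin N, (((if i < j then (1:ℝ) else 0)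
      + (if j < i then 1 else 0)) + (if i = j then 1 else 0))) = (N:ℝ) * N := by
    simp [h1, mul_comm]
  have h3 : (∑ i : Fin N, ∑ j : Fin N, if j < i then (1:ℝ) else 0)
      = ∑ i : Fin N, ∑ j : Fin N, if i < j then (1:ℝ) else 0 := Finset.sum_comm
  have h4 : (∑ i : Fin N, ∑ j : Fin N, if i = j then (1:ℝ) else 0) = N := by
    simp [Finset.sum_ite_eq]
  simp only [Finset.sum_add_distrib, h3, h4] at h2
  linarith

lemma sum_ite_const (N : ℕ) (C : ℝ) :
    (∑ i : Fin N, ∑ j : Fin N, if i < j then C else 0) = ((N:ℝ) * ((N:ℝ) - 1) / 2) * C := by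
  have : ∀ i j : Fin N, (if i < j then C else 0) = C * (if i < j then (1:ℝ) else 0) := by
    intro i j; split <;> simp
  simp_rw [this, ← Finset.mul_sum]
  rw [pair_count]; ring

/-- The set of pairwise distances. -/
def distSet (N : ℕ) (q : Fin N → EuclideanSpace ℝ (Fin 3)) : Set ℝ :=
  { d : ℝ | ∃ i j : Fin N, i < j ∧ d = ‖q i - q j‖ }

lemma distSet_finite (N : ℕ) (q : Fin N → EuclideanSpace ℝ (Fin 3)) :
    (distSet N q).Finite := by
  apply Set.Finite.subset (Set.finite_range (fun p : Fin N × Fin N => ‖q p.1 - q p.2‖))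
  rintro d ⟨i, j, _, rfl⟩
  exact ⟨(i, j), rfl⟩

lemma distSet_nonempty (N : ℕ) (hN : 2 ≤ N) (q : Fin N → EuclideanSpace ℝ (Fin 3)) :
    (distSet N q).Nonempty := by
  refine ⟨_, ⟨⟨0, by omega⟩, ⟨1, by omega⟩, ?_, rfl⟩⟩
  exact Fin.mk_lt_mk.mpr one_pos

lemma sep_mem (N : ℕ) (hN : 2 ≤ N) (q : Fin N → EuclideanSpace ℝ (Fin 3)) :
    sep N q ∈ distSet N q :=
  Set.Nonempty.csInf_mem (distSet_nonempty N hN q) (distSet_finite N q)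

lemma sep_le_dist (N : ℕ) (q : Fin N → EuclideanSpace ℝ (Fin 3)) {d : ℝ}
    (hd : d ∈ distSet N q) : sep N q ≤ d :=
  csInf_le (distSet_finite N q).bddBelow hd

lemma sep_pos (N : ℕ) (hN : 2 ≤ N) (q : Fin N → EuclideanSpace ℝ (Fin 3))
    (hq : Function.Injective q) : 0 < sep N q := by
  obtain ⟨i, j, hij, hd⟩ := sep_mem N hN q
  rw [hd]
  rw [norm_sub_pos_iff]
  exact fun h => hij.ne (hq h)

lemma sep_le_two (N : ℕ) (hN : 2 ≤ N) (q : Fin N → EuclideanSpace ℝ (Fin 3))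
    (hq : ∀ i, ‖q i‖ = 1) : sep N q ≤ 2 := by
  refine le_trans (sep_le_dist N q (d := ‖q ⟨0, by omega⟩ - q ⟨1, by omega⟩‖)
    ⟨_, _, Fin.mk_lt_mk.mpr one_pos, rfl⟩) ?_
  calc ‖q ⟨0, by omega⟩ - q ⟨1, by omega⟩‖ ≤ ‖q ⟨0, by omega⟩‖ + ‖q ⟨1, by omega⟩‖ :=
        norm_sub_le _ _
    _ = 2 := by rw [hq, hq]; norm_num

/-- The set of attainable separation distances. -/
def packSet (N : ℕ) : Set ℝ :=
  { d : ℝ | ∃ q : Fin N → EuclideanSpace ℝ (Fin 3),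
    (∀ i, ‖q i‖ = 1) ∧ Function.Injective q ∧ d = sep N q }

lemma packSet_nonempty (N : ℕ) (hN : 2 ≤ N) : (packSet N).Nonempty :=
  ⟨_, circQ N, circQ_norm N, circQ_inj N (by omega), rfl⟩

lemma packSet_bddAbove (N : ℕ) (hN : 2 ≤ N) : BddAbove (packSet N) := by
  refine ⟨2, ?_⟩
  rintro d ⟨q, hq1, hq2, rfl⟩
  exact sep_le_two N hN q hq1

lemma sep_le_bestPacking (N : ℕ) (hN : 2 ≤ N) (q : Fin N → EuclideanSpace ℝ (Fin 3))
    (hq1 : ∀ i, ‖q i‖ = 1) (hq2 : Function.Injective q) : sep N q ≤ bestPacking N :=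
  le_csSup (packSet_bddAbove N hN) ⟨q, hq1, hq2, rfl⟩

lemma bestPacking_pos (N : ℕ) (hN : 2 ≤ N) : 0 < bestPacking N :=
  lt_of_lt_of_le (sep_pos N hN (circQ N) (circQ_inj N (by omega)))
    (sep_le_bestPacking N hN (circQ N) (circQ_norm N) (circQ_inj N (by omega)))

noncomputable def rsum (s : ℝ) (N : ℕ) (q : Fin N → EuclideanSpace ℝ (Fin 3)) : ℝ :=
  ∑ i : Fin N, ∑ j : Fin N, if i < j then ‖q i - q j‖ ^ (-s) else 0

lemma NN_pos (N : ℕ) (hN : 2 ≤ N) : 0 < (N : ℝ) * ((N : ℝ) - 1) := by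
  have : (2:ℝ) ≤ N := by exact_mod_cast hN
  nlinarith

lemma avgE_add (s : ℝ) (hs : s ≠ 0) (N : ℕ) (hN : 2 ≤ N)
    (q : Fin N → EuclideanSpace ℝ (Fin 3)) :
    avgE s N q + 1/s = (2 / ((N:ℝ) * ((N:ℝ) - 1)) / s) * rsum s N q := by
  have hNr : ((N:ℝ) * ((N:ℝ) - 1)) ≠ 0 := (NN_pos N hN).ne'
  have key : (∑ i : Fin N, ∑ j : Fin N, if i < j then Vpair s ‖q i - q j‖ else 0)
      = (rsum s N q - (N:ℝ) * ((N:ℝ) - 1) / 2) / s := by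
    have hterm : ∀ i j : Fin N, (if i < j then Vpair s ‖q i - q j‖ else 0)
        = ((if i < j then ‖q i - q j‖ ^ (-s) else 0)
          - (if i < j then (1:ℝ) else 0)) / s := by
      intro i j
      unfold Vpair
      rw [if_neg hs]
      split <;> simp
    simp_rw [hterm, ← Finset.sum_div, Finset.sum_sub_distrib]
    rw [pair_count]
    rfl
  unfold avgE
  rw [key]
  have hN1 : (N:ℝ) - 1 ≠ 0 := by
    have : (2:ℝ) ≤ N := by exact_mod_cast hN
    linarith
  field_simp
  ring

lemma rsum_lower (s : ℝ) (hs : 0 < s) (N : ℕ) (hN : 2 ≤ N)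
    (q : Fin N → EuclideanSpace ℝ (Fin 3))
    (hq1 : ∀ i, ‖q i‖ = 1) (hq2 : Function.Injective q) :
    bestPacking N ^ (-s) ≤ rsum s N q := by
  obtain ⟨i, j, hij, hd⟩ := sep_mem N hN q
  have hnn : ∀ i j : Fin N, 0 ≤ (if i < j then ‖q i - q j‖ ^ (-s) else 0) := by
    intro i j; split <;> positivity
  have h1 : (if i < j then ‖q i - q j‖ ^ (-s) else 0) ≤ ∑ j' : Fin N,
      if i < j' then ‖q i - q j'‖ ^ (-s) else 0 :=
    Finset.single_le_sum (fun j' _ => hnn i j') (Finset.mem_univ j)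
  have h2 : (∑ j' : Fin N, if i < j' then ‖q i - q j'‖ ^ (-s) else 0) ≤ rsum s N q :=
    Finset.single_le_sum (fun i' _ => Finset.sum_nonneg fun j' _ => hnn i' j')
      (Finset.mem_univ i)
  have h3 : bestPacking N ^ (-s) ≤ ‖q i - q j‖ ^ (-s) := by
    rw [← hd]
    exact Real.rpow_le_rpow_of_nonpos (sep_pos N hN q hq2)
      (sep_le_bestPacking N hN q hq1 hq2) (neg_nonpos.mpr hs.le)
  rw [if_pos hij] at h1
  exact le_trans h3 (le_trans h1 h2)

lemma rsum_upper (s : ℝ) (hs : 0 < s) (N : ℕ)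
    (q : Fin N → EuclideanSpace ℝ (Fin 3)) {a : ℝ} (ha : 0 < a)
    (hsep : a ≤ sep N q) :
    rsum s N q ≤ ((N:ℝ) * ((N:ℝ) - 1) / 2) * a ^ (-s) := by
  rw [← sum_ite_const N (a ^ (-s))]
  apply Finset.sum_le_sum
  intro i _
  apply Finset.sum_le_sum
  intro j _
  split_ifs with h
  · exact Real.rpow_le_rpow_of_nonpos ha
      (le_trans hsep (sep_le_dist N q ⟨i, j, h, rfl⟩)) (neg_nonpos.mpr hs.le)
  · exact le_refl 0

lemma energy_lb (s : ℝ) (hs : 0 < s) (N : ℕ) (hN : 2 ≤ N) :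
    ∀ E ∈ { E : ℝ | ∃ q : Fin N → EuclideanSpace ℝ (Fin 3),
      (∀ i, ‖q i‖ = 1) ∧ Function.Injective q ∧ E = avgE s N q },
      (2 / ((N:ℝ) * ((N:ℝ) - 1)) / s) * bestPacking N ^ (-s) - 1/s ≤ E := by
  rintro E ⟨q, hq1, hq2, rfl⟩
  have h1 : avgE s N q + 1/s = (2 / ((N:ℝ) * ((N:ℝ) - 1)) / s) * rsum s N q :=
    avgE_add s hs.ne' N hN q
  have hc : 0 ≤ 2 / ((N:ℝ) * ((N:ℝ) - 1)) / s := by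
    have := NN_pos N hN
    positivity
  have h2 := mul_le_mul_of_nonneg_left (rsum_lower s hs N hN q hq1 hq2) hc
  linarith

lemma cfg_nonempty (s : ℝ) (N : ℕ) (hN : 2 ≤ N) :
    { E : ℝ | ∃ q : Fin N → EuclideanSpace ℝ (Fin 3),
      (∀ i, ‖q i‖ = 1) ∧ Function.Injective q ∧ E = avgE s N q }.Nonempty :=
  ⟨_, circQ N, circQ_norm N, circQ_inj N (by omega), rfl⟩

lemma vmin_lower (s : ℝ) (hs : 0 < s) (N : ℕ) (hN : 2 ≤ N) :
    (2 / ((N:ℝ) * ((N:ℝ) - 1)) / s) * bestPacking N ^ (-s) ≤ vmin s N + 1/s := by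
  have := le_csInf (cfg_nonempty s N hN) (energy_lb s hs N hN)
  unfold vmin
  linarith

lemma vmin_upper (s : ℝ) (hs : 0 < s) (N : ℕ) (hN : 2 ≤ N)
    (q : Fin N → EuclideanSpace ℝ (Fin 3))
    (hq1 : ∀ i, ‖q i‖ = 1) (hq2 : Function.Injective q) {a : ℝ} (ha : 0 < a)
    (hsep : a ≤ sep N q) :
    vmin s N + 1/s ≤ (1/s) * a ^ (-s) := by
  have hNr : ((N:ℝ) * ((N:ℝ) - 1)) ≠ 0 := (NN_pos N hN).ne'
  have h1 : vmin s N ≤ avgE s N q :=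
    csInf_le ⟨_, energy_lb s hs N hN⟩ ⟨q, hq1, hq2, rfl⟩
  have h2 : avgE s N q + 1/s = (2 / ((N:ℝ) * ((N:ℝ) - 1)) / s) * rsum s N q :=
    avgE_add s hs.ne' N hN q
  have hc : 0 ≤ 2 / ((N:ℝ) * ((N:ℝ) - 1)) / s := by
    have := NN_pos N hN
    positivity
  have h3 := mul_le_mul_of_nonneg_left (rsum_upper s hs N q ha hsep) hc
  have h4 : (2 / ((N:ℝ) * ((N:ℝ) - 1)) / s) * (((N:ℝ) * ((N:ℝ) - 1) / 2) * a ^ (-s))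
      = (1/s) * a ^ (-s) := by
    have hN1 : (N:ℝ) - 1 ≠ 0 := by
      have : (2:ℝ) ≤ N := by exact_mod_cast hN
      linarith
    field_simp
  linarith

lemma tendsto_const_rpow_one_div (K : ℝ) (hK : 0 < K) :
    Filter.Tendsto (fun s : ℝ => K ^ (1/s)) atTop (nhds 1) := by
  have h0 : Filter.Tendsto (fun s : ℝ => Real.log K * (1/s)) atTop (nhds 0) := by
    have := tendsto_inv_atTop_zero.const_mul (Real.log K)
    simpa [one_div] using this
  have h1 : Filter.Tendsto (fun s : ℝ => Real.exp (Real.log K * (1/s))) atTop (nhds 1) := by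
    simpa [Function.comp_def] using (Real.continuous_exp.tendsto 0).comp h0
  refine h1.congr fun s => ?_
  rw [Real.rpow_def_of_pos hK]

lemma tendsto_div_rpow_one_div (c : ℝ) (hc : 0 < c) :
    Filter.Tendsto (fun s : ℝ => (s/c) ^ (1/s)) atTop (nhds 1) := by
  have h2 : Filter.Tendsto (fun s : ℝ => s ^ (1/s) * (c⁻¹) ^ (1/s)) atTop (nhds 1) := by
    simpa using tendsto_rpow_div.mul (tendsto_const_rpow_one_div c⁻¹ (inv_pos.mpr hc))
  refine h2.congr' ?_
  filter_upwards [eventually_ge_atTop (0:ℝ)] with s hs0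
  rw [show s / c = s * c⁻¹ from div_eq_mul_inv s c,
    Real.mul_rpow hs0 (inv_nonneg.mpr hc.le)]

theorem stmt12 (N : ℕ) (hN : 2 ≤ N) :
    Filter.Tendsto (fun s : ℝ => (vmin s N + 1 / s) ^ (-(1 / s)))
      Filter.atTop (nhds (bestPacking N)) := by
  have hρ : 0 < bestPacking N := bestPacking_pos N hN
  set ρ := bestPacking N with hρdef
  have hcpos : 0 < 2 / ((N:ℝ) * ((N:ℝ) - 1)) := by
    have := NN_pos N hN
    positivity
  set c : ℝ := 2 / ((N:ℝ) * ((N:ℝ) - 1)) with hcdef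
  rw [Metric.tendsto_nhds]
  intro ε hε
  set δ : ℝ := min (ε/2) (ρ/2) with hδdef
  have hδ0 : 0 < δ := lt_min (by linarith) (by linarith)
  have hδρ : δ < ρ := lt_of_le_of_lt (min_le_right _ _) (by linarith)
  set a : ℝ := ρ - δ with hadef
  have ha0 : 0 < a := by simp only [hadef]; linarith
  have haε : ρ - ε < a := by
    have : δ ≤ ε/2 := min_le_left _ _
    simp only [hadef]; linarith
  -- a configuration with separation greater than a
  have hρs : sSup (packSet N) = ρ := rfl
  obtain ⟨d, hdmem, hda⟩ : ∃ d ∈ packSet N, a < d :=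
    exists_lt_of_lt_csSup (packSet_nonempty N hN)
      (by rw [hρs]; simp only [hadef]; linarith)
  obtain ⟨q, hq1, hq2, rfl⟩ := hdmem
  -- limit facts
  have hA : Filter.Tendsto (fun s : ℝ => a * s ^ (1/s)) atTop (nhds a) := by
    simpa using tendsto_rpow_div.const_mul a
  have hB : Filter.Tendsto (fun s : ℝ => ρ * (s/c) ^ (1/s)) atTop (nhds ρ) := by
    simpa using (tendsto_div_rpow_one_div c hcpos).const_mul ρ
  have hA' : ∀ᶠ s : ℝ in atTop, ρ - ε < a * s ^ (1/s) := hA.eventually_const_lt haε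
  have hB' : ∀ᶠ s : ℝ in atTop, ρ * (s/c) ^ (1/s) < ρ + ε :=
    hB.eventually_lt_const (by linarith)
  have hbound : ∀ᶠ s : ℝ in atTop,
      a * s ^ (1/s) ≤ (vmin s N + 1/s) ^ (-(1/s)) ∧
      (vmin s N + 1/s) ^ (-(1/s)) ≤ ρ * (s/c) ^ (1/s) := by
    filter_upwards [eventually_gt_atTop (0:ℝ)] with s hs0
    have hsne : s ≠ 0 := hs0.ne'
    have hL : (c/s) * ρ ^ (-s) ≤ vmin s N + 1/s := vmin_lower s hs0 N hN
    have hU : vmin s N + 1/s ≤ (1/s) * a ^ (-s) :=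
      vmin_upper s hs0 N hN q hq1 hq2 ha0 hda.le
    have hv0 : 0 < vmin s N + 1/s :=
      lt_of_lt_of_le (by positivity) hL
    have hexp : -(1/s) ≤ 0 := neg_nonpos.mpr (by positivity)
    constructor
    · have h5 : ((1/s) * a ^ (-s)) ^ (-(1/s)) ≤ (vmin s N + 1/s) ^ (-(1/s)) :=
        Real.rpow_le_rpow_of_nonpos hv0 hU hexp
      refine le_trans (le_of_eq ?_) h5
      rw [Real.mul_rpow (by positivity) (by positivity)]
      have e1 : ((1:ℝ)/s) ^ (-(1/s)) = s ^ (1/s) := by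
        rw [one_div, Real.inv_rpow hs0.le, Real.rpow_neg hs0.le, inv_inv]
      have e2 : (a ^ (-s)) ^ (-(1/s)) = a := by
        rw [← Real.rpow_mul ha0.le]
        have : -s * -(1/s) = 1 := by field_simp
        rw [this, Real.rpow_one]
      rw [e1, e2]
      ring
    · have h5 : (vmin s N + 1/s) ^ (-(1/s)) ≤ ((c/s) * ρ ^ (-s)) ^ (-(1/s)) :=
        Real.rpow_le_rpow_of_nonpos (by positivity) hL hexp
      refine le_trans h5 (le_of_eq ?_)
      rw [Real.mul_rpow (by positivity) (by positivity)]
      have e1 : (c/s) ^ (-(1/s)) = (s/c) ^ ((1:ℝ)/s) := by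
        rw [Real.rpow_neg (by positivity), ← Real.inv_rpow (by positivity), inv_div]
      have e2 : (ρ ^ (-s)) ^ (-(1/s)) = ρ := by
        rw [← Real.rpow_mul hρ.le]
        have : -s * -(1/s) = 1 := by field_simp
        rw [this, Real.rpow_one]
      rw [e1, e2]
      ring
  filter_upwards [hbound, hA', hB'] with s hs h3 h4
  rw [Real.dist_eq, abs_sub_lt_iff]
  exact ⟨by linarith [hs.1, hs.2], by linarith [hs.1, hs.2]⟩
end

section
/- Let s < 0 and let N > 2 be an integer. Then v_s(N) ≥ ((N+1)N/((N+2)(N-1)))·v_s(N+1) - 2·V_s(0)/((N+2)(N-1)), where V_s(0) = -1/s; equivalently, v_s(N) ≥ ((N+1)N·v_s(N+1) + 2/s)/((N+2)(N-1)). -/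
open scoped BigOperators

/-! ### Auxiliary material -/

abbrev E3' := EuclideanSpace ℝ (Fin 3)

def rieszSet (s : ℝ) (M : ℕ) : Set ℝ :=
  { E : ℝ | ∃ q : Fin M → EuclideanSpace ℝ (Fin 3),
    (∀ i, ‖q i‖ = 1) ∧ Function.Injective q ∧ E = avgE s M q }

lemma vmin_eq (s : ℝ) (M : ℕ) : vmin s M = sInf (rieszSet s M) := rfl

lemma Vpair_eq {s : ℝ} (hs : s < 0) (r : ℝ) : Vpair s r = (r ^ (-s) - 1) / s :=
  if_neg hs.ne

lemma Vpair_zero {s : ℝ} (hs : s < 0) : Vpair s 0 = -(1/s) := by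
  rw [Vpair_eq hs, Real.zero_rpow (by linarith : -s ≠ 0)]
  ring

lemma Vpair_anti {s : ℝ} (hs : s < 0) {r r' : ℝ} (hr : 0 ≤ r) (hle : r ≤ r') :
    Vpair s r' ≤ Vpair s r := by
  rw [Vpair_eq hs, Vpair_eq hs]
  have h := Real.rpow_le_rpow hr hle (neg_nonneg.mpr hs.le)
  rw [div_eq_mul_inv, div_eq_mul_inv]
  exact mul_le_mul_of_nonpos_right (by linarith) (inv_nonpos.mpr hs.le)

lemma Vpair_two_neg {s : ℝ} (hs : s < 0) : Vpair s 2 < 0 := by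
  rw [Vpair_eq hs]
  have h1 : 1 < (2:ℝ) ^ (-s) :=
    (Real.one_lt_rpow_iff_of_pos two_pos).mpr (Or.inl ⟨one_lt_two, by linarith⟩)
  exact div_neg_of_pos_of_neg (by linarith) hs

lemma exists_unit_orthogonal (x : E3') (hx : ‖x‖ = 1) :
    ∃ u : E3', ‖u‖ = 1 ∧ inner ℝ x u = (0:ℝ) := by
  have h3 : Module.finrank ℝ E3' = 3 := finrank_euclideanSpace_fin
  have hsum := Submodule.finrank_add_finrank_orthogonal (𝕜 := ℝ) (ℝ ∙ x)
  have hx0 : x ≠ 0 := by intro h; rw [h] at hx; simp at hx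
  have h1 : Module.finrank ℝ (ℝ ∙ x) = 1 := finrank_span_singleton hx0
  have hpos : 0 < Module.finrank ℝ ((ℝ ∙ x)ᗮ) := by omega
  have hne : ((ℝ ∙ x)ᗮ : Submodule ℝ E3') ≠ ⊥ := by
    intro h; rw [h] at hpos; simp at hpos
  obtain ⟨u, hu, hu0⟩ := Submodule.exists_mem_ne_zero_of_ne_bot hne
  refine ⟨‖u‖⁻¹ • u, ?_, ?_⟩
  · simp [norm_smul, abs_of_nonneg, inv_mul_cancel₀ (norm_ne_zero_iff.2 hu0)]
  · have : inner ℝ x u = (0:ℝ) := by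
      have := (Submodule.mem_orthogonal _ u).1 hu x (Submodule.mem_span_singleton_self x)
      simpa [real_inner_comm] using this
    simp [inner_smul_right, this]

lemma exists_near_point (x : E3') (hx : ‖x‖ = 1) (δ : ℝ) (hδ : 0 < δ) :
    ∃ p : E3', ‖p‖ = 1 ∧ p ≠ x ∧ ‖p - x‖ < δ := by
  obtain ⟨u, hu, hxu⟩ := exists_unit_orthogonal x hx
  have hux : inner ℝ u x = (0:ℝ) := by rwa [real_inner_comm]
  set t : ℝ := min (δ/2) (1/2) with ht
  have ht0 : 0 < t := by positivity
  have ht1 : t ≤ 1/2 := min_le_right _ _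
  have htδ : t ≤ δ/2 := min_le_left _ _
  set a : ℝ := Real.sqrt (1 - t^2) with ha
  have h1t : (0:ℝ) ≤ 1 - t^2 := by nlinarith
  have ha2 : a^2 = 1 - t^2 := Real.sq_sqrt h1t
  have ha1 : 1 - t^2 ≤ a := by
    rw [ha]
    nlinarith [Real.sq_sqrt h1t, Real.sqrt_nonneg (1 - t^2)]
  set p : E3' := a • x + t • u with hp
  have hnp2 : ‖p‖^2 = 1 := by
    rw [hp, norm_add_sq_real, inner_smul_left, inner_smul_right, norm_smul, norm_smul]
    simp [hx, hu, hxu, abs_of_nonneg (Real.sqrt_nonneg _), mul_pow]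
    linarith [ha2]
  have hnp : ‖p‖ = 1 := by
    have := Real.sqrt_sq (norm_nonneg p)
    rw [← this, hnp2, Real.sqrt_one]
  have hd2 : ‖p - x‖^2 = 2 - 2*a := by
    have : p - x = (a-1) • x + t • u := by rw [hp]; module
    rw [this, norm_add_sq_real, inner_smul_left, inner_smul_right, norm_smul, norm_smul]
    simp [hx, hu, hxu, mul_pow, sq_abs]
    nlinarith [ha2]
  have hdlt : ‖p - x‖ < δ := by
    have h2 : ‖p - x‖^2 ≤ 2*t^2 := by rw [hd2]; nlinarith
    have h3 : ‖p - x‖^2 < δ^2 := by nlinarith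
    nlinarith [norm_nonneg (p - x)]
  refine ⟨p, hnp, ?_, hdlt⟩
  intro hpx
  have : inner ℝ u p = (t:ℝ) := by
    rw [hp]; rw [inner_add_right, inner_smul_right, inner_smul_right, hux,
      real_inner_self_eq_norm_sq, hu]
    ring
  rw [hpx, hux] at this
  exact absurd this.symm (ne_of_gt ht0)

lemma exists_config (M : ℕ) :
    ∃ q : Fin M → E3', (∀ i, ‖q i‖ = 1) ∧ Function.Injective q := by
  refine ⟨fun k => !₂[Real.cos (k * Real.pi / M), Real.sin (k * Real.pi / M), 0], ?_, ?_⟩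
  · intro i
    rw [EuclideanSpace.norm_eq]
    simp [Fin.sum_univ_three, Real.sin_sq_add_cos_sq, Real.cos_sq_add_sin_sq]
  · intro i j hij
    have hM : (0:ℝ) < M := by
      have : 0 < M := Fin.pos_iff_nonempty.2 ⟨i⟩
      exact_mod_cast this
    have hmem : ∀ k : Fin M, (k * Real.pi / M : ℝ) ∈ Set.Icc 0 Real.pi := by
      intro k
      constructor
      · positivity
      · rw [div_le_iff₀ hM]
        have : (k:ℝ) ≤ M := by
          have := k.isLt; exact_mod_cast Nat.le_of_lt this
        nlinarith [Real.pi_pos]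
    have h0 := congrArg (fun v : E3' => v 0) hij
    simp at h0
    have := Real.injOn_cos (hmem i) (hmem j) h0
    have hpi := Real.pi_pos
    have : (i:ℝ) = j := by
      field_simp at this
      linarith
    exact Fin.ext (by exact_mod_cast this)

lemma rieszSet_nonempty (s : ℝ) (M : ℕ) : (rieszSet s M).Nonempty := by
  obtain ⟨q, h1, h2⟩ := exists_config M
  exact ⟨avgE s M q, q, h1, h2, rfl⟩

lemma rieszSet_bddBelow {s : ℝ} (hs : s < 0) (M : ℕ) : BddBelow (rieszSet s M) := by
  refine ⟨2 / ((M : ℝ) * ((M : ℝ) - 1)) * ((M:ℝ)^2 * Vpair s 2), ?_⟩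
  rintro E ⟨q, hq1, -, rfl⟩
  have hc : (0:ℝ) ≤ 2 / ((M : ℝ) * ((M : ℝ) - 1)) := by
    rcases Nat.eq_zero_or_pos M with h | h
    · subst h; norm_num
    · have : (1:ℝ) ≤ M := by exact_mod_cast h
      have : (0:ℝ) ≤ (M : ℝ) * ((M : ℝ) - 1) := by nlinarith
      positivity
  rw [avgE]
  apply mul_le_mul_of_nonneg_left _ hc
  have hterm : ∀ i j : Fin M, Vpair s 2 ≤ (if i < j then Vpair s ‖q i - q j‖ else 0) := by
    intro i j
    by_cases h : i < j
    · rw [if_pos h]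
      apply Vpair_anti hs (norm_nonneg _)
      calc ‖q i - q j‖ ≤ ‖q i‖ + ‖q j‖ := norm_sub_le _ _
        _ ≤ 2 := by rw [hq1 i, hq1 j]; norm_num
    · rw [if_neg h]
      exact (Vpair_two_neg hs).le
  calc ((M:ℝ)^2 * Vpair s 2) = ∑ _i : Fin M, ∑ _j : Fin M, Vpair s 2 := by
        simp [Finset.sum_const, Finset.card_univ, nsmul_eq_mul]; ring
    _ ≤ _ := Finset.sum_le_sum (fun i _ => Finset.sum_le_sum (fun j _ => hterm i j))

lemma pair_sum_snoc {N : ℕ} (v : Fin (N+1) → Fin (N+1) → ℝ) :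
    ∑ i : Fin (N+1), ∑ j : Fin (N+1), (if i < j then v i j else 0)
      = (∑ i : Fin N, ∑ j : Fin N,
          if i < j then v i.castSucc j.castSucc else 0)
        + ∑ i : Fin N, v i.castSucc (Fin.last N) := by
  rw [Fin.sum_univ_castSucc (f := fun i => ∑ j, if i < j then v i j else 0)]
  have hlast : (∑ j : Fin (N+1), if Fin.last N < j then v (Fin.last N) j else 0) = 0 := by
    apply Finset.sum_eq_zero
    intro j _
    rw [if_neg (not_lt.mpr (Fin.le_last j))]
  rw [hlast, add_zero, ← Finset.sum_add_distrib]
  apply Finset.sum_congr rfl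
  intro i _
  rw [Fin.sum_univ_castSucc (f := fun j => if i.castSucc < j then v i.castSucc j else 0)]
  rw [if_pos (Fin.castSucc_lt_last i)]
  simp only [Fin.castSucc_lt_castSucc_iff]

lemma offdiag_eq_two_mul {N : ℕ} (v : Fin N → Fin N → ℝ) (hsym : ∀ i j, v i j = v j i) :
    ∑ i, ∑ j, (if i ≠ j then v i j else 0)
      = 2 * ∑ i, ∑ j, (if i < j then v i j else 0) := by
  have h1 : ∀ i j : Fin N, (if i ≠ j then v i j else 0)
      = (if i < j then v i j else 0) + (if j < i then v i j else 0) := by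
    intro i j
    rcases lt_trichotomy i j with h | h | h
    · rw [if_pos h.ne, if_pos h, if_neg (not_lt.mpr h.le), add_zero]
    · subst h; simp
    · rw [if_pos h.ne', if_neg (not_lt.mpr h.le), if_pos h, zero_add]
  simp_rw [h1, Finset.sum_add_distrib]
  have h2 : (∑ i : Fin N, ∑ j : Fin N, if j < i then v i j else 0)
      = ∑ i : Fin N, ∑ j : Fin N, if i < j then v i j else 0 := by
    rw [Finset.sum_comm]
    apply Finset.sum_congr rfl
    intro a _
    apply Finset.sum_congr rfl
    intro b _
    by_cases h : a < b <;> simp [h, hsym b a]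
  rw [h2]; ring

lemma snoc_inj {N : ℕ} {q : Fin N → E3'} (hq : Function.Injective q) {p : E3'}
    (hp : ∀ i, q i ≠ p) : Function.Injective (Fin.snoc q p) := by
  intro a b hab
  induction a using Fin.lastCases with
  | last =>
    induction b using Fin.lastCases with
    | last => rfl
    | cast j =>
      rw [Fin.snoc_last, Fin.snoc_castSucc] at hab
      exact absurd hab.symm (hp j)
  | cast i =>
    induction b using Fin.lastCases with
    | last =>
      rw [Fin.snoc_last, Fin.snoc_castSucc] at hab
      exact absurd hab (hp i)
    | cast j =>
      rw [Fin.snoc_castSucc, Fin.snoc_castSucc] at hab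
      rw [hq hab]

lemma avg_snoc (s : ℝ) {N : ℕ} (q : Fin N → E3') (p : E3') :
    avgE s (N+1) (Fin.snoc q p)
      = 2 / (((N+1 : ℕ) : ℝ) * (((N+1 : ℕ) : ℝ) - 1)) *
        ((∑ i : Fin N, ∑ j : Fin N, if i < j then Vpair s ‖q i - q j‖ else 0)
          + ∑ i : Fin N, Vpair s ‖q i - p‖) := by
  rw [avgE, pair_sum_snoc]
  simp only [Fin.snoc_castSucc, Fin.snoc_last]

lemma cont_vpair {s : ℝ} (hs : s < 0) (c : E3') :
    Continuous (fun p : E3' => Vpair s ‖c - p‖) := by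
  have h1 : Continuous (fun r : ℝ => (r ^ (-s) - 1) / s) := by
    apply Continuous.div_const
    apply Continuous.sub _ continuous_const
    exact continuous_iff_continuousAt.mpr
      (fun x => Real.continuousAt_rpow_const x _ (Or.inr (by linarith)))
  have h2 : Continuous (fun p : E3' => ‖c - p‖) := (continuous_const.sub continuous_id).norm
  have h3 := h1.comp h2
  have : (fun p : E3' => Vpair s ‖c - p‖) = (fun p : E3' => (‖c - p‖ ^ (-s) - 1) / s) := by
    funext p
    exact Vpair_eq hs _
  rw [this]
  exact h3

theorem stmt15 (s : ℝ) (hs : s < 0) (N : ℕ) (hN : 2 < N) :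
    vmin s N ≥ ((N : ℝ) + 1) * (N : ℝ) / (((N : ℝ) + 2) * ((N : ℝ) - 1)) * vmin s (N + 1)
      - 2 * (-(1 / s)) / (((N : ℝ) + 2) * ((N : ℝ) - 1)) := by
  have hn3 : (3:ℝ) ≤ (N:ℝ) := by exact_mod_cast hN
  set n : ℝ := (N:ℝ) with hn
  have hn0 : (0:ℝ) < n := by linarith
  have hn1 : (0:ℝ) < n - 1 := by linarith
  have hs0 : s ≠ 0 := hs.ne
  rw [ge_iff_le, show vmin s N = sInf (rieszSet s N) from rfl]
  apply le_csInf (rieszSet_nonempty s N)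
  rintro E ⟨q, hq1, hqinj, rfl⟩
  -- Key estimate : vmin s (N+1) ≤ C * avgE + D
  have hkey : vmin s (N+1)
      ≤ (n+2)*(n-1)/((n+1)*n) * avgE s N q + 2*(-(1/s))/((n+1)*n) := by
    set S := ∑ i : Fin N, ∑ j : Fin N, (if i < j then Vpair s ‖q i - q j‖ else 0) with hSdef
    have havg : avgE s N q = 2/(n*(n-1)) * S := rfl
    set F : Fin N → ℝ := fun i => ∑ j, if i ≠ j then Vpair s ‖q i - q j‖ else 0 with hF
    have hsum2 : ∑ i, F i = 2 * S := by
      rw [hF, hSdef]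
      exact offdiag_eq_two_mul _ (fun i j => by rw [norm_sub_rev])
    -- choose a point with below-average interaction
    have hNe : (Finset.univ : Finset (Fin N)).Nonempty := by
      refine ⟨⟨0, by omega⟩, Finset.mem_univ _⟩
    obtain ⟨i0, -, hFi0⟩ : ∃ i0 ∈ Finset.univ, F i0 ≤ 2*S/n := by
      apply Finset.exists_le_of_sum_le hNe
      rw [hsum2, Finset.sum_const, Finset.card_univ, Fintype.card_fin, nsmul_eq_mul]
      rw [← hn, mul_div_cancel₀]
      exact hn0.ne'
    -- energy of the configuration with q i0 "doubled"
    have hT : ∀ p : E3', avgE s (N+1) (Fin.snoc q p)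
        = 2/((n+1)*n) * (S + ∑ i, Vpair s ‖q i - p‖) := by
      intro p
      rw [avg_snoc s q p, ← hSdef]
      push_cast
      ring_nf
      rw [← hn]
      ring
    have hsum_i0 : ∑ i, Vpair s ‖q i - q i0‖ = F i0 + Vpair s 0 := by
      have hterm : ∀ i : Fin N, Vpair s ‖q i - q i0‖
          = (if i0 ≠ i then Vpair s ‖q i0 - q i‖ else 0)
            + (if i0 = i then Vpair s 0 else 0) := by
        intro i
        by_cases h : i0 = i
        · subst h; simp
        · rw [if_pos h, if_neg h, add_zero, norm_sub_rev]
      rw [Finset.sum_congr rfl (fun i _ => hterm i), Finset.sum_add_distrib,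
        Finset.sum_ite_eq]
      simp only [Finset.mem_univ, if_true]
      rfl
    have hcoeff : (0:ℝ) ≤ 2/((n+1)*n) := by positivity
    have hG0 : avgE s (N+1) (Fin.snoc q (q i0))
        ≤ 2/((n+1)*n) * (S + 2*S/n + (-(1/s))) := by
      rw [hT, hsum_i0, Vpair_zero hs]
      apply mul_le_mul_of_nonneg_left _ hcoeff
      linarith
    -- the infimum is at most the energy of the doubled configuration (by perturbation)
    have hinf : vmin s (N+1) ≤ avgE s (N+1) (Fin.snoc q (q i0)) := by
      rw [show vmin s (N+1) = sInf (rieszSet s (N+1)) from rfl]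
      rw [Real.sInf_le_iff (rieszSet_bddBelow hs (N+1)) (rieszSet_nonempty s (N+1))]
      intro ε hε
      have hcont : Continuous (fun p : E3' => avgE s (N+1) (Fin.snoc q p)) := by
        have : (fun p : E3' => avgE s (N+1) (Fin.snoc q p))
            = fun p : E3' => 2/((n+1)*n) * (S + ∑ i, Vpair s ‖q i - p‖) := by
          funext p; exact hT p
        rw [this]
        exact continuous_const.mul (continuous_const.add
          (continuous_finset_sum _ (fun i _ => cont_vpair hs (q i))))
      obtain ⟨δ, hδ0, hδ⟩ := Metric.continuousAt_iff.mp hcont.continuousAt ε hε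
      have hnontriv : Nontrivial (Fin N) := by
        apply Fin.nontrivial_iff_two_le.mpr
        omega
      obtain ⟨j1, hj1⟩ := exists_ne i0
      have hNe' : (Finset.univ.erase i0).Nonempty :=
        ⟨j1, Finset.mem_erase.mpr ⟨hj1, Finset.mem_univ _⟩⟩
      set D := (Finset.univ.erase i0).inf' hNe' (fun j => ‖q i0 - q j‖) with hD
      have hD0 : 0 < D := by
        rw [hD, Finset.lt_inf'_iff]
        intro j hj
        have hji : j ≠ i0 := (Finset.mem_erase.mp hj).1
        have : q i0 ≠ q j := fun h => hji (hqinj h).symm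
        exact norm_sub_pos_iff.mpr this
      set δ' := min δ D with hδ'
      have hδ'0 : 0 < δ' := lt_min hδ0 hD0
      obtain ⟨p, hp1, hpne, hpd⟩ := exists_near_point (q i0) (hq1 i0) δ' hδ'0
      have hprange : ∀ i, q i ≠ p := by
        intro i h
        by_cases hi : i = i0
        · subst hi; exact hpne h.symm
        · have h1 : D ≤ ‖q i0 - q i‖ :=
            Finset.inf'_le _ (Finset.mem_erase.mpr ⟨hi, Finset.mem_univ _⟩)
          have h2 : ‖p - q i0‖ = ‖q i0 - q i‖ := by rw [← h, norm_sub_rev]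
          have h3 : ‖p - q i0‖ < D := lt_of_lt_of_le hpd (min_le_right _ _)
          linarith
      refine ⟨avgE s (N+1) (Fin.snoc q p), ⟨Fin.snoc q p, ?_, snoc_inj hqinj hprange, rfl⟩, ?_⟩
      · intro i
        induction i using Fin.lastCases with
        | last => rw [Fin.snoc_last]; exact hp1
        | cast i => rw [Fin.snoc_castSucc]; exact hq1 i
      · have hdist : dist p (q i0) < δ := by
          rw [dist_eq_norm]
          exact lt_of_lt_of_le hpd (min_le_left _ _)
        have := hδ hdist
        rw [Real.dist_eq] at this
        have := (abs_lt.mp this).2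
        linarith
    -- put things together
    have hSavg : S = n*(n-1)/2 * avgE s N q := by
      rw [havg]
      field_simp
    have hfin : 2/((n+1)*n) * (S + 2*S/n + (-(1/s)))
        = (n+2)*(n-1)/((n+1)*n) * avgE s N q + 2*(-(1/s))/((n+1)*n) := by
      rw [hSavg]
      field_simp
    calc vmin s (N+1) ≤ avgE s (N+1) (Fin.snoc q (q i0)) := hinf
      _ ≤ 2/((n+1)*n) * (S + 2*S/n + (-(1/s))) := hG0
      _ = _ := hfin
  -- conclude by arithmetic
  have hA : (0:ℝ) ≤ (n+1)*n/((n+2)*(n-1)) := by positivity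
  have h := mul_le_mul_of_nonneg_left hkey hA
  have heq : (n+1)*n/((n+2)*(n-1)) *
      ((n+2)*(n-1)/((n+1)*n) * avgE s N q + 2*(-(1/s))/((n+1)*n))
      = avgE s N q + 2*(-(1/s))/((n+2)*(n-1)) := by
    field_simp
  rw [heq] at h
  linarith
end

section
/- For every real s with -2 < s and s ≠ 0, the second discrete derivative of the minimal average standardized Riesz pair-energy at N = 5 satisfies the lower bound v_s(4) - 2·v_s(5) + v_s(6) ≥ (1/s)·( (3/8)^{s/2} - (2/5)·(1/2)^{s/2} - (3/5)·(1/3)^{s/2} ). -/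
open scoped BigOperators

open Set

noncomputable def gE (s t : ℝ) : ℝ := ((2 - 2*t) ^ (-s/2) - 1) / s
noncomputable def gE1 (s t : ℝ) : ℝ := (2 - 2*t) ^ (-s/2 - 1)
noncomputable def gE2 (s t : ℝ) : ℝ := (s+2) * (2 - 2*t) ^ (-s/2 - 2)
noncomputable def gE3 (s t : ℝ) : ℝ := (s+2)*(s+4) * (2 - 2*t) ^ (-s/2 - 3)

lemma base_pos {t : ℝ} (ht : t < 1) : (0:ℝ) < 2 - 2*t := by linarith

lemma hasDerivAt_base (t : ℝ) : HasDerivAt (fun t : ℝ => 2 - 2*t) (-2) t := by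
  simpa using ((hasDerivAt_id t).const_mul (2:ℝ)).const_sub 2

lemma gE_hasDerivAt {s : ℝ} (hs0 : s ≠ 0) {t : ℝ} (ht : t < 1) :
    HasDerivAt (gE s) (gE1 s t) t := by
  have h := ((hasDerivAt_base t).rpow_const (p := -s/2) (Or.inl (base_pos ht).ne')).sub_const 1
  have h2 := h.div_const s
  refine h2.congr_deriv ?_
  unfold gE1
  field_simp


lemma gE1_hasDerivAt {s t : ℝ} (ht : t < 1) :
    HasDerivAt (gE1 s) (gE2 s t) t := by
  have h := (hasDerivAt_base t).rpow_const (p := -s/2 - 1) (Or.inl (base_pos ht).ne')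
  refine h.congr_deriv ?_
  unfold gE2
  ring_nf

lemma gE2_hasDerivAt {s t : ℝ} (ht : t < 1) :
    HasDerivAt (gE2 s) (gE3 s t) t := by
  have h := ((hasDerivAt_base t).rpow_const (p := -s/2 - 2) (Or.inl (base_pos ht).ne')).const_mul (s+2)
  refine h.congr_deriv ?_
  unfold gE3
  ring_nf

lemma gE1_pos {s t : ℝ} (ht : t < 1) : 0 < gE1 s t :=
  Real.rpow_pos_of_pos (base_pos ht) _

lemma gE2_nonneg {s t : ℝ} (hs : -2 < s) (ht : t < 1) : 0 ≤ gE2 s t :=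
  mul_nonneg (by linarith) (Real.rpow_pos_of_pos (base_pos ht) _).le

lemma gE3_nonneg {s t : ℝ} (hs : -2 < s) (ht : t < 1) : 0 ≤ gE3 s t :=
  mul_nonneg (mul_nonneg (by linarith) (by linarith)) (Real.rpow_pos_of_pos (base_pos ht) _).le

lemma gE_contOn {s : ℝ} (hs0 : s ≠ 0) : ContinuousOn (gE s) (Iio 1) :=
  fun x hx => ((gE_hasDerivAt hs0 hx).continuousAt).continuousWithinAt

lemma gE1_contOn {s : ℝ} : ContinuousOn (gE1 s) (Iio 1) :=
  fun x hx => ((gE1_hasDerivAt hx).continuousAt).continuousWithinAt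

lemma gE_convex {s : ℝ} (hs : -2 < s) (hs0 : s ≠ 0) : ConvexOn ℝ (Iio 1) (gE s) := by
  refine convexOn_of_hasDerivWithinAt2_nonneg (convex_Iio 1) (gE_contOn hs0) (f' := gE1 s)
    (f'' := gE2 s) ?_ ?_ ?_
  · intro x hx
    rw [interior_Iio] at hx ⊢
    exact (gE_hasDerivAt hs0 hx).hasDerivWithinAt
  · intro x hx
    rw [interior_Iio] at hx ⊢
    exact (gE1_hasDerivAt hx).hasDerivWithinAt
  · intro x hx
    rw [interior_Iio] at hx
    exact gE2_nonneg hs hx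

lemma gE1_convex {s : ℝ} (hs : -2 < s) : ConvexOn ℝ (Iio 1) (gE1 s) := by
  refine convexOn_of_hasDerivWithinAt2_nonneg (convex_Iio 1) gE1_contOn (f' := gE2 s)
    (f'' := gE3 s) ?_ ?_ ?_
  · intro x hx
    rw [interior_Iio] at hx ⊢
    exact (gE1_hasDerivAt hx).hasDerivWithinAt
  · intro x hx
    rw [interior_Iio] at hx ⊢
    exact (gE2_hasDerivAt hx).hasDerivWithinAt
  · intro x hx
    rw [interior_Iio] at hx
    exact gE3_nonneg hs hx

/-- Tangent line bound for a convex function. -/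
lemma tangent_le {f f' : ℝ → ℝ} {S : Set ℝ} (hconv : ConvexOn ℝ S f) {x y : ℝ}
    (hx : x ∈ S) (hy : y ∈ S) (hd : HasDerivAt f (f' x) x) :
    f x + f' x * (y - x) ≤ f y := by
  rcases lt_trichotomy x y with h | h | h
  · have := hconv.le_slope_of_hasDerivAt hx hy h hd
    rw [slope_def_field] at this
    rw [le_div_iff₀ (by linarith : (0:ℝ) < y - x)] at this
    linarith
  · simp [h]
  · have := hconv.slope_le_of_hasDerivAt hy hx h hd
    rw [slope_def_field, div_le_iff₀ (by linarith : (0:ℝ) < x - y)] at this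
    linarith

lemma poly_hasDerivAt (β δ c2 x : ℝ) :
    HasDerivAt (fun x : ℝ => β + δ*x + c2*x^2) (δ + 2*c2*x) x := by
  have h := (((hasDerivAt_id x).const_mul δ).const_add β).add
    ((hasDerivAt_pow 2 x).const_mul c2)
  simp only [id_eq] at h
  refine h.congr_deriv ?_
  push_cast
  ring

lemma lin_hasDerivAt (δ c2 x : ℝ) :
    HasDerivAt (fun x : ℝ => δ + 2*c2*x) (2*c2) x := by
  simpa using ((hasDerivAt_id x).const_mul (2*c2)).const_add δ

/-- The key pointwise quadratic lower bound for the octahedron (N = 6) LP argument. -/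
lemma six_pointwise {s : ℝ} (hs : -2 < s) (hs0 : s ≠ 0) {t : ℝ}
    (htl : -1 ≤ t) (htu : t < 1) :
    gE s 0 + gE1 s 0 * t + (gE1 s 0 - (gE s 0 - gE s (-1))) * t^2 ≤ gE s t := by
  set β := gE s 0 with hβ
  set δ := gE1 s 0 with hδ
  set c2 := gE1 s 0 - (gE s 0 - gE s (-1)) with hc2
  set F : ℝ → ℝ := fun x => gE s x - (β + δ*x + c2*x^2) with hF
  set F' : ℝ → ℝ := fun x => gE1 s x - (δ + 2*c2*x) with hF'
  have hdF : ∀ x ∈ Iio (1:ℝ), HasDerivAt F (F' x) x := fun x hx =>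
    (gE_hasDerivAt hs0 hx).sub (poly_hasDerivAt β δ c2 x)
  have hdF' : ∀ x ∈ Iio (1:ℝ), HasDerivAt F' (gE2 s x - 2*c2) x := fun x hx =>
    (gE1_hasDerivAt hx).sub (lin_hasDerivAt δ c2 x)
  have hcontF : ContinuousOn F (Iio 1) := fun x hx => ((hdF x hx).continuousAt).continuousWithinAt
  have hcontF' : ContinuousOn F' (Iio 1) := fun x hx => ((hdF' x hx).continuousAt).continuousWithinAt
  have hF0 : F 0 = 0 := by simp [hF, hβ]
  have hFm1 : F (-1) = 0 := by simp only [hF]; ring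
  have hF'0 : F' 0 = 0 := by simp [hF', hδ]
  -- convexity of F'
  have hconv : ConvexOn ℝ (Iio 1) F' := by
    refine convexOn_of_hasDerivWithinAt2_nonneg (convex_Iio 1) hcontF'
      (f' := fun x => gE2 s x - 2*c2) (f'' := gE3 s) ?_ ?_ ?_
    · intro x hx
      rw [interior_Iio] at hx ⊢
      exact (hdF' x hx).hasDerivWithinAt
    · intro x hx
      rw [interior_Iio] at hx ⊢
      exact ((gE2_hasDerivAt hx).sub_const _).hasDerivWithinAt
    · intro x hx
      rw [interior_Iio] at hx
      exact gE3_nonneg hs hx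
  -- Rolle point
  obtain ⟨c, hc, hF'c⟩ : ∃ c ∈ Ioo (-1:ℝ) 0, F' c = 0 := by
    refine exists_hasDerivAt_eq_zero (by norm_num) (hcontF.mono ?_) (hFm1.trans hF0.symm)
      (fun x hx => hdF x (lt_trans hx.2 one_pos))
    intro x hx
    exact lt_of_le_of_lt hx.2 one_pos
  -- sign of F' on the three regions
  have hmemc : c ∈ Iio (1:ℝ) := lt_trans hc.2 one_pos
  have hmem0 : (0:ℝ) ∈ Iio (1:ℝ) := by norm_num
  have hsign_right : ∀ τ ∈ Ioo (0:ℝ) 1, 0 ≤ F' τ := by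
    intro τ hτ
    have hτc : 0 < τ - c := by nlinarith [hc.2, hτ.1]
    have key := hconv.2 hmemc (show τ ∈ Iio (1:ℝ) from hτ.2)
      (show 0 ≤ τ/(τ - c) from div_nonneg hτ.1.le hτc.le)
      (show 0 ≤ -c/(τ - c) by
        apply div_nonneg _ hτc.le; linarith [hc.2])
      (show τ/(τ - c) + -c/(τ - c) = 1 by field_simp; ring)
    have harg : (τ/(τ - c)) • c + (-c/(τ - c)) • τ = 0 := by
      simp only [smul_eq_mul]
      field_simp
      ring
    rw [harg] at key
    rw [hF'0, hF'c] at key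
    simp only [smul_eq_mul, mul_zero, zero_add] at key
    have hb : 0 < -c/(τ - c) := by
      apply div_pos _ hτc; linarith [hc.2]
    exact (mul_nonneg_iff_of_pos_left hb).mp key
  have hsign_mid : ∀ τ ∈ Ioo c 0, F' τ ≤ 0 := by
    intro τ hτ
    have hcneg : c < 0 := hc.2
    have hτneg : τ < 0 := hτ.2
    have key := hconv.2 hmemc hmem0
      (show 0 ≤ τ/c by
        rw [div_nonneg_iff]; right; exact ⟨hτneg.le, hcneg.le⟩)
      (show 0 ≤ 1 - τ/c by
        rw [sub_nonneg, div_le_one_of_neg hcneg]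
        exact hτ.1.le)
      (show τ/c + (1 - τ/c) = 1 by ring)
    have harg : (τ/c) • c + (1 - τ/c) • (0:ℝ) = τ := by
      simp only [smul_eq_mul, mul_zero, add_zero]
      field_simp [hcneg.ne]
    rw [harg, hF'0, hF'c] at key
    simp only [smul_eq_mul, mul_zero, add_zero] at key
    exact key
  have hsign_left : ∀ τ ∈ Ioo (-1:ℝ) c, 0 ≤ F' τ := by
    intro τ hτ
    have hτneg : τ < 0 := lt_trans hτ.2 hc.2
    have hτmem : τ ∈ Iio (1:ℝ) := lt_trans hτneg one_pos
    have ha : 0 ≤ c/τ := by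
      rw [div_nonneg_iff]; right; exact ⟨hc.2.le, hτneg.le⟩
    have ha1 : c/τ ≤ 1 := by
      rw [div_le_one_of_neg hτneg]
      exact hτ.2.le
    have key := hconv.2 hτmem hmem0 ha
      (show 0 ≤ 1 - c/τ by linarith)
      (show c/τ + (1 - c/τ) = 1 by ring)
    have harg : (c/τ) • τ + (1 - c/τ) • (0:ℝ) = c := by
      simp only [smul_eq_mul, mul_zero, add_zero]
      field_simp [hτneg.ne]
    rw [harg, hF'c, hF'0] at key
    simp only [smul_eq_mul, mul_zero, add_zero] at key
    have hapos : 0 < c/τ := div_pos_of_neg_of_neg hc.2 hτneg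
    exact (mul_nonneg_iff_of_pos_left hapos).mp key
  have hFt : 0 ≤ F t := by
    rcases le_or_gt 0 t with h0t | ht0
    · have hmono : MonotoneOn F (Ico (0:ℝ) 1) := by
        apply monotoneOn_of_hasDerivWithinAt_nonneg (convex_Ico 0 1)
          (hcontF.mono Ico_subset_Iio_self) (f' := F')
        · intro x hx
          rw [interior_Ico] at hx
          exact (hdF x hx.2).hasDerivWithinAt
        · intro x hx
          rw [interior_Ico] at hx
          exact hsign_right x hx
      have h := hmono ⟨le_refl 0, one_pos⟩ ⟨h0t, htu⟩ h0t
      rw [hF0] at h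
      exact h
    · rcases le_or_gt c t with hct | htc
      · have hanti : AntitoneOn F (Icc c 0) := by
        -- F' ≤ 0 on Ioo c 0
          apply antitoneOn_of_hasDerivWithinAt_nonpos (convex_Icc c 0)
            (hcontF.mono (fun x hx => lt_of_le_of_lt hx.2 one_pos)) (f' := F')
          · intro x hx
            rw [interior_Icc] at hx
            exact (hdF x (lt_trans hx.2 one_pos)).hasDerivWithinAt
          · intro x hx
            rw [interior_Icc] at hx
            exact hsign_mid x hx
        have h := hanti ⟨hct, ht0.le⟩ ⟨hc.2.le, le_refl 0⟩ ht0.le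
        rw [hF0] at h
        exact h
      · have hmono : MonotoneOn F (Icc (-1:ℝ) c) := by
          apply monotoneOn_of_hasDerivWithinAt_nonneg (convex_Icc (-1) c)
            (hcontF.mono (fun x hx => lt_of_le_of_lt hx.2 (lt_trans hc.2 one_pos))) (f' := F')
          · intro x hx
            rw [interior_Icc] at hx
            exact (hdF x (lt_trans hx.2 (lt_trans hc.2 one_pos))).hasDerivWithinAt
          · intro x hx
            rw [interior_Icc] at hx
            exact hsign_left x hx
        have h := hmono ⟨le_refl (-1), hc.1.le⟩ ⟨htl, htc.le⟩ htl
        rw [hFm1] at h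
        exact h
  simp only [hF] at hFt
  linarith

lemma four_pointwise {s : ℝ} (hs : -2 < s) (hs0 : s ≠ 0) {t : ℝ} (htu : t < 1) :
    gE s (-1/3) + gE1 s (-1/3) * (t + 1/3) ≤ gE s t := by
  have h := tangent_le (f' := gE1 s) (gE_convex hs hs0)
    (show (-1/3:ℝ) ∈ Iio 1 by norm_num) (show t ∈ Iio 1 from htu)
    (gE_hasDerivAt hs0 (by norm_num))
  calc gE s (-1/3) + gE1 s (-1/3) * (t + 1/3)
      = gE s (-1/3) + gE1 s (-1/3) * (t - (-1/3)) := by ring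
    _ ≤ gE s t := h

section Geometry

variable {u v : EuclideanSpace ℝ (Fin 3)}

lemma norm_sub_sq_unit (hu : ‖u‖ = 1) (hv : ‖v‖ = 1) :
    ‖u - v‖^2 = 2 - 2 * (inner ℝ u v : ℝ) := by
  rw [norm_sub_sq_real, hu, hv]
  ring

lemma inner_le_one_unit (hu : ‖u‖ = 1) (hv : ‖v‖ = 1) : (inner ℝ u v : ℝ) ≤ 1 := by
  have := real_inner_le_norm u v
  rw [hu, hv] at this
  linarith

lemma neg_one_le_inner_unit (hu : ‖u‖ = 1) (hv : ‖v‖ = 1) : -1 ≤ (inner ℝ u v : ℝ) := by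
  have := abs_real_inner_le_norm u v
  rw [hu, hv] at this
  have := abs_le.mp this
  linarith [this.1]

lemma inner_lt_one_unit (hu : ‖u‖ = 1) (hv : ‖v‖ = 1) (huv : u ≠ v) :
    (inner ℝ u v : ℝ) < 1 := by
  have hpos : 0 < ‖u - v‖^2 := by
    have h2 : 0 < ‖u - v‖ := norm_pos_iff.mpr (sub_ne_zero_of_ne huv)
    positivity
  rw [norm_sub_sq_unit hu hv] at hpos
  linarith

lemma Vpair_eq_gE {s : ℝ} (hs0 : s ≠ 0) (hu : ‖u‖ = 1) (hv : ‖v‖ = 1) (huv : u ≠ v) :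
    Vpair s ‖u - v‖ = gE s (inner ℝ u v : ℝ) := by
  have hr : (0:ℝ) ≤ ‖u - v‖ := norm_nonneg _
  have key : ‖u - v‖ ^ (-s) = (2 - 2 * (inner ℝ u v : ℝ)) ^ (-s/2) := by
    rw [← norm_sub_sq_unit hu hv, ← Real.rpow_natCast ‖u - v‖ 2, ← Real.rpow_mul hr]
    congr 1
    ring
  simp only [Vpair, gE, hs0, if_false, key]

end Geometry

section Kernels

variable {N : ℕ} (q : Fin N → EuclideanSpace ℝ (Fin 3))

lemma kernel1 : (0:ℝ) ≤ ∑ i, ∑ j, (inner ℝ (q i) (q j) : ℝ) := by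
  have : ∑ i, ∑ j, (inner ℝ (q i) (q j) : ℝ) = (inner ℝ (∑ i, q i) (∑ j, q j) : ℝ) := by
    rw [sum_inner]
    exact Finset.sum_congr rfl fun i _ => by rw [inner_sum]
  rw [this]
  exact real_inner_self_nonneg

lemma inner_euclid (u v : EuclideanSpace ℝ (Fin 3)) :
    (inner ℝ u v : ℝ) = ∑ a, u a * v a := by
  simp [PiLp.inner_apply, RCLike.inner_apply, mul_comm]

lemma kernel2 (hq : ∀ i, ‖q i‖ = 1) :
    (N:ℝ)^2/3 ≤ ∑ i, ∑ j, (inner ℝ (q i) (q j) : ℝ)^2 := by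
  set M : Fin 3 → Fin 3 → ℝ := fun a b => ∑ i, q i a * q i b with hM
  have hsum : ∑ i, ∑ j, (inner ℝ (q i) (q j) : ℝ)^2 = ∑ a, ∑ b, (M a b)^2 := by
    simp_rw [inner_euclid, hM]
    calc ∑ i, ∑ j, (∑ a, q i a * q j a)^2
        = ∑ i, ∑ j, ∑ a, ∑ b, (q i a * q j a) * (q i b * q j b) := by
          simp_rw [sq, Finset.sum_mul_sum]
      _ = ∑ a, ∑ b, ∑ i, ∑ j, (q i a * q j a) * (q i b * q j b) := by
          calc ∑ i, ∑ j, ∑ a, ∑ b, (q i a * q j a) * (q i b * q j b)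
              = ∑ i, ∑ a, ∑ j, ∑ b, (q i a * q j a) * (q i b * q j b) :=
                Finset.sum_congr rfl fun i _ => Finset.sum_comm
            _ = ∑ a, ∑ i, ∑ j, ∑ b, (q i a * q j a) * (q i b * q j b) :=
                Finset.sum_comm
            _ = ∑ a, ∑ i, ∑ b, ∑ j, (q i a * q j a) * (q i b * q j b) :=
                Finset.sum_congr rfl fun a _ =>
                  Finset.sum_congr rfl fun i _ => Finset.sum_comm
            _ = ∑ a, ∑ b, ∑ i, ∑ j, (q i a * q j a) * (q i b * q j b) :=
                Finset.sum_congr rfl fun a _ => Finset.sum_comm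
      _ = ∑ a, ∑ b, (∑ i, q i a * q i b) * (∑ j, q j a * q j b) := by
          refine Finset.sum_congr rfl fun a _ => Finset.sum_congr rfl fun b _ => ?_
          rw [Finset.sum_mul_sum]
          refine Finset.sum_congr rfl fun i _ => Finset.sum_congr rfl fun j _ => ?_
          ring
      _ = ∑ a, ∑ b, (∑ i, q i a * q i b)^2 := by simp_rw [sq]
  have htrace : ∑ a, M a a = N := by
    rw [hM]
    rw [Finset.sum_comm]
    have : ∀ i, ∑ a, q i a * q i a = 1 := by
      intro i
      have h := inner_euclid (q i) (q i)
      rw [real_inner_self_eq_norm_sq, hq i] at h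
      simpa using h.symm
    simp [this]
  rw [hsum]
  have hdiag : ∑ a, (M a a)^2 ≤ ∑ a, ∑ b, (M a b)^2 := by
    apply Finset.sum_le_sum
    intro a _
    exact Finset.single_le_sum (f := fun b => (M a b)^2) (fun b _ => sq_nonneg _)
      (Finset.mem_univ a)
  have hCS : (↑N)^2/3 ≤ ∑ a, (M a a)^2 := by
    have h3 : ∑ a : Fin 3, M a a = M 0 0 + M 1 1 + M 2 2 := by
      rw [Fin.sum_univ_three]
    have h3' : ∑ a : Fin 3, (M a a)^2 = (M 0 0)^2 + (M 1 1)^2 + (M 2 2)^2 := by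
      rw [Fin.sum_univ_three]
    rw [h3'] ; rw [h3] at htrace
    nlinarith [sq_nonneg (M 0 0 - M 1 1), sq_nonneg (M 1 1 - M 2 2), sq_nonneg (M 0 0 - M 2 2),
      htrace]
  linarith

lemma sum_ite_lt_eq (f : Fin N → Fin N → ℝ) (hsym : ∀ i j, f i j = f j i) :
    ∑ i, ∑ j, (if i < j then f i j else 0)
      = ((∑ i, ∑ j, f i j) - ∑ i, f i i)/2 := by
  have key : ∀ i j : Fin N, f i j = (if i < j then f i j else 0)
      + (if j < i then f i j else 0) + (if i = j then f i j else 0) := by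
    intro i j
    rcases lt_trichotomy i j with h|h|h
    · simp [h, not_lt_of_gt h, h.ne]
    · simp [h, lt_irrefl]
    · simp [h, not_lt_of_gt h, h.ne']
  have h1 : ∑ i, ∑ j, f i j = (∑ i, ∑ j, (if i < j then f i j else 0))
      + (∑ i, ∑ j, (if j < i then f i j else 0)) + ∑ i, f i i := by
    calc ∑ i, ∑ j, f i j
        = ∑ i, ∑ j, ((if i < j then f i j else 0) + (if j < i then f i j else 0)
            + (if i = j then f i j else 0)) := by
          exact Finset.sum_congr rfl fun i _ => Finset.sum_congr rfl fun j _ => key i j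
      _ = (∑ i, ∑ j, (if i < j then f i j else 0))
          + (∑ i, ∑ j, (if j < i then f i j else 0))
          + ∑ i, ∑ j, (if i = j then f i j else 0) := by
          simp_rw [Finset.sum_add_distrib]
      _ = (∑ i, ∑ j, (if i < j then f i j else 0))
          + (∑ i, ∑ j, (if j < i then f i j else 0)) + ∑ i, f i i := by
          congr 1
          exact Finset.sum_congr rfl fun i _ => by simp
  have h2 : ∑ i, ∑ j, (if j < i then f i j else 0)
      = ∑ i, ∑ j, (if i < j then f i j else 0) := by
    rw [Finset.sum_comm]
    refine Finset.sum_congr rfl fun i _ => Finset.sum_congr rfl fun j _ => ?_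
    by_cases h : i < j
    · simp [h, hsym]
    · simp [h]
  rw [h2] at h1
  linarith

end Kernels

lemma energy_lb_s18 {s : ℝ} (hs0 : s ≠ 0) {N : ℕ} (q : Fin N → EuclideanSpace ℝ (Fin 3))
    (hq : ∀ i, ‖q i‖ = 1) (hinj : Function.Injective q) {P0 P1 P2 : ℝ}
    (hP1 : 0 ≤ P1) (hP2 : 0 ≤ P2)
    (hpt : ∀ t : ℝ, -1 ≤ t → t < 1 → P0 + P1*t + P2*t^2 ≤ gE s t) :
    ((N:ℝ)^2*P0 + P2*(N:ℝ)^2/3 - N*(P0+P1+P2))/2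
      ≤ ∑ i, ∑ j, if i < j then Vpair s ‖q i - q j‖ else 0 := by
  set f : Fin N → Fin N → ℝ :=
    fun i j => P0 + P1*(inner ℝ (q i) (q j):ℝ) + P2*(inner ℝ (q i) (q j):ℝ)^2 with hf
  have hsym : ∀ i j, f i j = f j i := by
    intro i j
    simp only [hf]
    rw [real_inner_comm]
  have step1 : ∑ i, ∑ j, (if i < j then f i j else 0)
      ≤ ∑ i, ∑ j, (if i < j then Vpair s ‖q i - q j‖ else 0) := by
    refine Finset.sum_le_sum fun i _ => Finset.sum_le_sum fun j _ => ?_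
    by_cases h : i < j
    · simp only [h, if_true]
      have hne : q i ≠ q j := fun he => h.ne (hinj he)
      rw [Vpair_eq_gE hs0 (hq i) (hq j) hne]
      exact hpt _ (neg_one_le_inner_unit (hq i) (hq j)) (inner_lt_one_unit (hq i) (hq j) hne)
    · simp [h]
  refine le_trans ?_ step1
  rw [sum_ite_lt_eq f hsym]
  have hdiag : ∑ i, f i i = N*(P0+P1+P2) := by
    have hv : ∀ i, f i i = P0+P1+P2 := by
      intro i
      have h1 : (inner ℝ (q i) (q i) : ℝ) = 1 := by
        rw [real_inner_self_eq_norm_sq, hq i]; norm_num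
      simp only [hf]
      rw [h1]
      ring
    rw [Finset.sum_congr rfl fun i _ => hv i, Finset.sum_const, Finset.card_univ,
      Fintype.card_fin, nsmul_eq_mul]
  have hexpand : ∑ i, ∑ j, f i j = (N:ℝ)^2*P0 + P1*(∑ i, ∑ j, (inner ℝ (q i) (q j):ℝ))
      + P2*(∑ i, ∑ j, (inner ℝ (q i) (q j):ℝ)^2) := by
    simp_rw [hf, Finset.sum_add_distrib, ← Finset.mul_sum, Finset.sum_const,
      Finset.card_univ, Fintype.card_fin, nsmul_eq_mul]
    push_cast
    ring
  rw [hdiag, hexpand]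
  have k1 := kernel1 q
  have k2 := kernel2 q hq
  have h1 : 0 ≤ P1*(∑ i, ∑ j, (inner ℝ (q i) (q j):ℝ)) := mul_nonneg hP1 k1
  have h2 : P2*((N:ℝ)^2/3) ≤ P2*(∑ i, ∑ j, (inner ℝ (q i) (q j):ℝ)^2) :=
    mul_le_mul_of_nonneg_left k2 hP2
  linarith

lemma avgE4_lb {s : ℝ} (hs : -2 < s) (hs0 : s ≠ 0) (q : Fin 4 → EuclideanSpace ℝ (Fin 3))
    (hq : ∀ i, ‖q i‖ = 1) (hinj : Function.Injective q) :
    gE s (-1/3) ≤ avgE s 4 q := by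
  have hb := energy_lb_s18 hs0 q hq hinj (P0 := gE s (-1/3) + gE1 s (-1/3)/3)
    (P1 := gE1 s (-1/3)) (P2 := 0) (le_of_lt (gE1_pos (by norm_num))) le_rfl ?_
  · unfold avgE
    push_cast at hb ⊢
    nlinarith [hb]
  · intro t htl htu
    have := four_pointwise hs hs0 (t := t) htu
    nlinarith [this]

lemma avgE6_lb {s : ℝ} (hs : -2 < s) (hs0 : s ≠ 0) (q : Fin 6 → EuclideanSpace ℝ (Fin 3))
    (hq : ∀ i, ‖q i‖ = 1) (hinj : Function.Injective q) :
    (gE s (-1) + 4 * gE s 0)/5 ≤ avgE s 6 q := by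
  have hP2 : 0 ≤ gE1 s 0 - (gE s 0 - gE s (-1)) := by
    have hconv := gE_convex hs hs0
    have hsl := hconv.slope_le_of_hasDerivAt (show (-1:ℝ) ∈ Iio 1 by norm_num)
      (show (0:ℝ) ∈ Iio 1 by norm_num) (by norm_num) (gE_hasDerivAt hs0 (by norm_num))
    rw [slope_def_field] at hsl
    norm_num at hsl
    linarith
  have hb := energy_lb_s18 hs0 q hq hinj (P0 := gE s 0) (P1 := gE1 s 0)
    (P2 := gE1 s 0 - (gE s 0 - gE s (-1))) (le_of_lt (gE1_pos one_pos)) hP2 ?_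
  · unfold avgE
    push_cast at hb ⊢
    nlinarith [hb]
  · intro t htl htu
    have := six_pointwise hs hs0 htl htu
    nlinarith [this]

noncomputable def vE (x : Fin 3 → ℝ) : EuclideanSpace ℝ (Fin 3) :=
  (WithLp.equiv 2 (Fin 3 → ℝ)).symm x

lemma vE_norm (x : Fin 3 → ℝ) : ‖vE x‖ = Real.sqrt (x 0^2 + x 1^2 + x 2^2) := by
  rw [EuclideanSpace.norm_eq]
  simp [vE, Fin.sum_univ_three, sq_abs]

lemma vE_sub (x y : Fin 3 → ℝ) : vE x - vE y = vE (x - y) := by simp [vE]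

lemma vE_inj {x y : Fin 3 → ℝ} (h : vE x = vE y) : x = y := by
  simpa [vE] using h

noncomputable def octa : Fin 6 → EuclideanSpace ℝ (Fin 3) :=
  ![vE ![1,0,0], vE ![-1,0,0], vE ![0,1,0], vE ![0,-1,0], vE ![0,0,1], vE ![0,0,-1]]

lemma octa_unit : ∀ i, ‖octa i‖ = 1 := by
  intro i
  fin_cases i <;> norm_num [octa, vE_norm, Matrix.cons_val_two, Matrix.tail_cons]

lemma octa_inj : Function.Injective octa := by
  intro i j h
  fin_cases i <;> fin_cases j <;> first
    | rfl
    | (exfalso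
       simp only [octa, Matrix.cons_val_zero, Matrix.cons_val_one, Matrix.head_cons,
         Matrix.cons_val_succ] at h
       have := congrFun (vE_inj h) 0
       have h1 := congrFun (vE_inj h) 1
       have h2 := congrFun (vE_inj h) 2
       norm_num [Matrix.cons_val_two, Matrix.tail_cons] at *)

noncomputable def quadc : Fin 4 → EuclideanSpace ℝ (Fin 3) := fun i => octa (i.castLE (by norm_num))

lemma quadc_unit : ∀ i, ‖quadc i‖ = 1 := fun i => octa_unit _

lemma quadc_inj : Function.Injective quadc := fun i j h =>
  Fin.castLE_injective _ (octa_inj h)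

lemma vmin4_lb {s : ℝ} (hs : -2 < s) (hs0 : s ≠ 0) : gE s (-1/3) ≤ vmin s 4 := by
  unfold vmin
  have hne : Set.Nonempty {E : ℝ | ∃ q : Fin 4 → EuclideanSpace ℝ (Fin 3),
      (∀ i, ‖q i‖ = 1) ∧ Function.Injective q ∧ E = avgE s 4 q} :=
    ⟨avgE s 4 quadc, ⟨quadc, quadc_unit, quadc_inj, rfl⟩⟩
  apply le_csInf hne
  rintro E ⟨q, hq, hinj, rfl⟩
  exact avgE4_lb hs hs0 q hq hinj

lemma vmin6_lb {s : ℝ} (hs : -2 < s) (hs0 : s ≠ 0) :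
    (gE s (-1) + 4 * gE s 0)/5 ≤ vmin s 6 := by
  unfold vmin
  have hne : Set.Nonempty {E : ℝ | ∃ q : Fin 6 → EuclideanSpace ℝ (Fin 3),
      (∀ i, ‖q i‖ = 1) ∧ Function.Injective q ∧ E = avgE s 6 q} :=
    ⟨avgE s 6 octa, ⟨octa, octa_unit, octa_inj, rfl⟩⟩
  apply le_csInf hne
  rintro E ⟨q, hq, hinj, rfl⟩
  exact avgE6_lb hs hs0 q hq hinj

lemma Vpair_ge {s r : ℝ} (hs0 : s ≠ 0) (hr0 : 0 < r) (hr2 : r ≤ 2) :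
    Vpair s 2 ≤ Vpair s r := by
  simp only [Vpair, hs0, if_false]
  rcases lt_or_gt_of_ne hs0 with hneg | hpos
  · -- s < 0 : r^(-s) ≤ 2^(-s), divide by s < 0
    have h1 : r ^ (-s) ≤ (2:ℝ) ^ (-s) := Real.rpow_le_rpow hr0.le hr2 (by linarith)
    rw [div_le_div_right_of_neg hneg]
    linarith
  · -- s > 0 : 2^(-s) ≤ r^(-s)
    have h1 : (2:ℝ) ^ (-s) ≤ r ^ (-s) := by
      rw [Real.rpow_neg (by norm_num), Real.rpow_neg hr0.le]
      apply inv_anti₀ (Real.rpow_pos_of_pos hr0 s)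
      exact Real.rpow_le_rpow hr0.le hr2 hpos.le
    rw [div_le_div_iff_of_pos_right hpos]
    linarith

lemma avgE5_ge {s : ℝ} (hs0 : s ≠ 0) (q : Fin 5 → EuclideanSpace ℝ (Fin 3))
    (hq : ∀ i, ‖q i‖ = 1) (hinj : Function.Injective q) :
    Vpair s 2 ≤ avgE s 5 q := by
  have hterm : ∀ i j : Fin 5, i < j → Vpair s 2 ≤ Vpair s ‖q i - q j‖ := by
    intro i j hij
    have hne : q i ≠ q j := fun he => hij.ne (hinj he)
    refine Vpair_ge hs0 (norm_pos_iff.mpr (sub_ne_zero_of_ne hne)) ?_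
    calc ‖q i - q j‖ ≤ ‖q i‖ + ‖q j‖ := norm_sub_le _ _
      _ = 2 := by rw [hq i, hq j]; norm_num
  have hsum : ∑ i : Fin 5, ∑ j : Fin 5, (if i < j then Vpair s 2 else 0)
      ≤ ∑ i : Fin 5, ∑ j : Fin 5, (if i < j then Vpair s ‖q i - q j‖ else 0) := by
    refine Finset.sum_le_sum fun i _ => Finset.sum_le_sum fun j _ => ?_
    by_cases h : i < j
    · simpa [h] using hterm i j h
    · simp [h]
  have hconst : ∑ i : Fin 5, ∑ j : Fin 5, (if i < j then Vpair s 2 else 0)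
      = 10 * Vpair s 2 := by
    rw [sum_ite_lt_eq (fun _ _ => Vpair s 2) (fun _ _ => rfl)]
    simp [Finset.sum_const, Finset.card_univ]
    ring
  unfold avgE
  push_cast
  nlinarith [hsum, hconst]

lemma vE_dist (x y : Fin 3 → ℝ) :
    ‖vE x - vE y‖ = Real.sqrt ((x 0 - y 0)^2 + (x 1 - y 1)^2 + (x 2 - y 2)^2) := by
  rw [vE_sub, vE_norm]
  simp [Pi.sub_apply]

noncomputable def bipy : Fin 5 → EuclideanSpace ℝ (Fin 3) :=
  ![vE ![0,0,1], vE ![0,0,-1], vE ![1,0,0],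
    vE ![-1/2, Real.sqrt 3/2, 0], vE ![-1/2, -(Real.sqrt 3/2), 0]]

lemma sq3 : (Real.sqrt 3)^2 = 3 := Real.sq_sqrt (by norm_num)

lemma bipy_unit : ∀ i, ‖bipy i‖ = 1 := by
  intro i
  fin_cases i <;> norm_num [bipy, vE_norm, div_pow, sq3, Matrix.cons_val_two, Matrix.tail_cons]

lemma d01 : ‖bipy 0 - bipy 1‖ = 2 := by
  rw [show bipy 0 = vE ![0,0,1] from rfl, show bipy 1 = vE ![0,0,-1] from rfl, vE_dist]
  norm_num [Matrix.cons_val_two, Matrix.tail_cons]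

lemma d02 : ‖bipy 0 - bipy 2‖ = Real.sqrt 2 := by
  rw [show bipy 0 = vE ![0,0,1] from rfl, show bipy 2 = vE ![1,0,0] from rfl, vE_dist]
  norm_num [Matrix.cons_val_two, Matrix.tail_cons]

lemma d03 : ‖bipy 0 - bipy 3‖ = Real.sqrt 2 := by
  rw [show bipy 0 = vE ![0,0,1] from rfl,
    show bipy 3 = vE ![-1/2, Real.sqrt 3/2, 0] from rfl, vE_dist]
  simp only [Matrix.cons_val_zero, Matrix.cons_val_one, Matrix.head_cons,
    Matrix.cons_val_succ, Matrix.cons_val_two, Matrix.tail_cons]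
  rw [show ((0:ℝ) - -1/2)^2 + (0 - Real.sqrt 3/2)^2 + ((1:ℝ) - 0)^2 = 2 by
    rw [show ((0:ℝ) - Real.sqrt 3/2)^2 = (Real.sqrt 3)^2/4 by ring]
    rw [sq3]; ring]

lemma d04 : ‖bipy 0 - bipy 4‖ = Real.sqrt 2 := by
  rw [show bipy 0 = vE ![0,0,1] from rfl,
    show bipy 4 = vE ![-1/2, -(Real.sqrt 3/2), 0] from rfl, vE_dist]
  simp only [Matrix.cons_val_zero, Matrix.cons_val_one, Matrix.head_cons,
    Matrix.cons_val_succ, Matrix.cons_val_two, Matrix.tail_cons]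
  rw [show ((0:ℝ) - -1/2)^2 + (0 - -(Real.sqrt 3/2))^2 + ((1:ℝ) - 0)^2 = 2 by
    rw [show ((0:ℝ) - -(Real.sqrt 3/2))^2 = (Real.sqrt 3)^2/4 by ring]
    rw [sq3]; ring]

lemma d12 : ‖bipy 1 - bipy 2‖ = Real.sqrt 2 := by
  rw [show bipy 1 = vE ![0,0,-1] from rfl, show bipy 2 = vE ![1,0,0] from rfl, vE_dist]
  norm_num [Matrix.cons_val_two, Matrix.tail_cons]

lemma d13 : ‖bipy 1 - bipy 3‖ = Real.sqrt 2 := by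
  rw [show bipy 1 = vE ![0,0,-1] from rfl,
    show bipy 3 = vE ![-1/2, Real.sqrt 3/2, 0] from rfl, vE_dist]
  simp only [Matrix.cons_val_zero, Matrix.cons_val_one, Matrix.head_cons,
    Matrix.cons_val_succ, Matrix.cons_val_two, Matrix.tail_cons]
  rw [show ((0:ℝ) - -1/2)^2 + (0 - Real.sqrt 3/2)^2 + ((-1:ℝ) - 0)^2 = 2 by
    rw [show ((0:ℝ) - Real.sqrt 3/2)^2 = (Real.sqrt 3)^2/4 by ring]
    rw [sq3]; ring]

lemma d14 : ‖bipy 1 - bipy 4‖ = Real.sqrt 2 := by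
  rw [show bipy 1 = vE ![0,0,-1] from rfl,
    show bipy 4 = vE ![-1/2, -(Real.sqrt 3/2), 0] from rfl, vE_dist]
  simp only [Matrix.cons_val_zero, Matrix.cons_val_one, Matrix.head_cons,
    Matrix.cons_val_succ, Matrix.cons_val_two, Matrix.tail_cons]
  rw [show ((0:ℝ) - -1/2)^2 + (0 - -(Real.sqrt 3/2))^2 + ((-1:ℝ) - 0)^2 = 2 by
    rw [show ((0:ℝ) - -(Real.sqrt 3/2))^2 = (Real.sqrt 3)^2/4 by ring]
    rw [sq3]; ring]

lemma d23 : ‖bipy 2 - bipy 3‖ = Real.sqrt 3 := by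
  rw [show bipy 2 = vE ![1,0,0] from rfl,
    show bipy 3 = vE ![-1/2, Real.sqrt 3/2, 0] from rfl, vE_dist]
  simp only [Matrix.cons_val_zero, Matrix.cons_val_one, Matrix.head_cons,
    Matrix.cons_val_succ, Matrix.cons_val_two, Matrix.tail_cons]
  rw [show ((1:ℝ) - -1/2)^2 + (0 - Real.sqrt 3/2)^2 + ((0:ℝ) - 0)^2 = 3 by
    rw [show ((0:ℝ) - Real.sqrt 3/2)^2 = (Real.sqrt 3)^2/4 by ring]
    rw [sq3]; ring]

lemma d24 : ‖bipy 2 - bipy 4‖ = Real.sqrt 3 := by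
  rw [show bipy 2 = vE ![1,0,0] from rfl,
    show bipy 4 = vE ![-1/2, -(Real.sqrt 3/2), 0] from rfl, vE_dist]
  simp only [Matrix.cons_val_zero, Matrix.cons_val_one, Matrix.head_cons,
    Matrix.cons_val_succ, Matrix.cons_val_two, Matrix.tail_cons]
  rw [show ((1:ℝ) - -1/2)^2 + (0 - -(Real.sqrt 3/2))^2 + ((0:ℝ) - 0)^2 = 3 by
    rw [show ((0:ℝ) - -(Real.sqrt 3/2))^2 = (Real.sqrt 3)^2/4 by ring]
    rw [sq3]; ring]

lemma d34 : ‖bipy 3 - bipy 4‖ = Real.sqrt 3 := by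
  rw [show bipy 3 = vE ![-1/2, Real.sqrt 3/2, 0] from rfl,
    show bipy 4 = vE ![-1/2, -(Real.sqrt 3/2), 0] from rfl, vE_dist]
  simp only [Matrix.cons_val_zero, Matrix.cons_val_one, Matrix.head_cons,
    Matrix.cons_val_succ, Matrix.cons_val_two, Matrix.tail_cons]
  rw [show ((-1/2:ℝ) - -1/2)^2 + (Real.sqrt 3/2 - -(Real.sqrt 3/2))^2 + ((0:ℝ) - 0)^2 = 3 by
    rw [show (Real.sqrt 3/2 - -(Real.sqrt 3/2))^2 = (Real.sqrt 3)^2 by ring]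
    rw [sq3]; ring]

lemma bipy_inj : Function.Injective bipy := by
  have hs3 : 0 < Real.sqrt 3 := Real.sqrt_pos.mpr (by norm_num)
  intro i j h
  fin_cases i <;> fin_cases j <;> first
    | rfl
    | (exfalso
       simp only [bipy, Matrix.cons_val_zero, Matrix.cons_val_one, Matrix.head_cons,
         Matrix.cons_val_succ] at h
       have h0 := congrFun (vE_inj h) 0
       have h1 := congrFun (vE_inj h) 1
       have h2 := congrFun (vE_inj h) 2
       simp only [Matrix.cons_val_zero, Matrix.cons_val_one, Matrix.head_cons,
         Matrix.cons_val_succ, Matrix.cons_val_two, Matrix.tail_cons] at h0 h1 h2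
       norm_num at * <;> linarith [Real.sqrt_pos.mpr (show (0:ℝ) < 3 by norm_num), h1])

lemma bipy_avg (s : ℝ) : avgE s 5 bipy
    = (Vpair s 2 + 6 * Vpair s (Real.sqrt 2) + 3 * Vpair s (Real.sqrt 3))/10 := by
  unfold avgE
  simp only [Fin.sum_univ_five]
  norm_num [d01, d02, d03, d04, d12, d13, d14, d23, d24, d34,
    (by decide : (0:Fin 5) < 2), (by decide : (0:Fin 5) < 3), (by decide : (0:Fin 5) < 4),
    (by decide : (1:Fin 5) < 2), (by decide : (1:Fin 5) < 3), (by decide : (1:Fin 5) < 4),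
    (by decide : (2:Fin 5) < 3), (by decide : (2:Fin 5) < 4), (by decide : (3:Fin 5) < 4),
    (by decide : ¬((2:Fin 5) = 0)), (by decide : ¬((3:Fin 5) = 0)), (by decide : ¬((4:Fin 5) = 0)),
    (by decide : ¬((3:Fin 5) < 2)), (by decide : ¬((4:Fin 5) < 2)), (by decide : ¬((4:Fin 5) < 3))]
  ring

lemma vmin5_ub {s : ℝ} (hs0 : s ≠ 0) : vmin s 5
    ≤ (Vpair s 2 + 6 * Vpair s (Real.sqrt 2) + 3 * Vpair s (Real.sqrt 3))/10 := by
  unfold vmin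
  apply csInf_le
  · refine ⟨Vpair s 2, ?_⟩
    rintro E ⟨q, hq, hinj, rfl⟩
    exact avgE5_ge hs0 q hq hinj
  · exact ⟨bipy, bipy_unit, bipy_inj, (bipy_avg s).symm⟩


theorem stmt18 (s : ℝ) (hs : -2 < s) (hs0 : s ≠ 0) :
    vmin s 4 - 2 * vmin s 5 + vmin s 6 ≥
      (1 / s) * ((3 / 8 : ℝ) ^ (s / 2) - (2 / 5) * (1 / 2 : ℝ) ^ (s / 2)
        - (3 / 5) * (1 / 3 : ℝ) ^ (s / 2)) := by
  have h4 := vmin4_lb hs hs0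
  have h6 := vmin6_lb hs hs0
  have h5 := vmin5_ub hs0
  have e1 : gE s (-1/3) = ((3/8:ℝ)^(s/2) - 1)/s := by
    unfold gE
    rw [show (2 - 2*(-1/3:ℝ)) = 8/3 by norm_num, neg_div,
      Real.rpow_neg (by norm_num : (0:ℝ) ≤ 8/3),
      show (3/8:ℝ) = (8/3)⁻¹ by norm_num,
      Real.inv_rpow (by norm_num : (0:ℝ) ≤ 8/3)]
  have e2 : gE s (-1) = ((2:ℝ)^(-s) - 1)/s := by
    unfold gE
    rw [show (2 - 2*(-1:ℝ)) = (2:ℝ)^(2:ℝ) by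
        rw [show ((2:ℝ):ℝ) = ((2:ℕ):ℝ) by norm_num, Real.rpow_natCast]; norm_num,
      ← Real.rpow_mul (by norm_num : (0:ℝ) ≤ 2)]
    norm_num
    rw [show (2:ℝ) * (-s/2) = -s by ring]
  have e3 : gE s 0 = ((2:ℝ)^(-(s/2)) - 1)/s := by
    unfold gE
    rw [show (2 - 2*(0:ℝ)) = 2 by norm_num, neg_div]
  have e4 : Vpair s 2 = ((2:ℝ)^(-s) - 1)/s := by
    simp [Vpair, hs0]
  have e5 : Vpair s (Real.sqrt 2) = ((2:ℝ)^(-(s/2)) - 1)/s := by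
    simp only [Vpair, hs0, if_false]
    rw [Real.sqrt_eq_rpow, ← Real.rpow_mul (by norm_num : (0:ℝ) ≤ 2),
      show (1/2:ℝ) * -s = -(s/2) by ring]
  have e6 : Vpair s (Real.sqrt 3) = ((3:ℝ)^(-(s/2)) - 1)/s := by
    simp only [Vpair, hs0, if_false]
    rw [Real.sqrt_eq_rpow, ← Real.rpow_mul (by norm_num : (0:ℝ) ≤ 3),
      show (1/2:ℝ) * -s = -(s/2) by ring]
  have r1 : (1/2:ℝ)^(s/2) = (2:ℝ)^(-(s/2)) := by
    rw [show (1/2:ℝ) = 2⁻¹ by norm_num, Real.inv_rpow (by norm_num : (0:ℝ) ≤ 2),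
      ← Real.rpow_neg (by norm_num : (0:ℝ) ≤ 2)]
  have r2 : (1/3:ℝ)^(s/2) = (3:ℝ)^(-(s/2)) := by
    rw [show (1/3:ℝ) = 3⁻¹ by norm_num, Real.inv_rpow (by norm_num : (0:ℝ) ≤ 3),
      ← Real.rpow_neg (by norm_num : (0:ℝ) ≤ 3)]
  rw [ge_iff_le]
  rw [e1] at h4
  rw [e2, e3] at h6
  rw [e4, e5, e6] at h5
  rw [r1, r2]
  have key : ((3/8:ℝ)^(s/2) - 1)/s
      - 2 * ((((2:ℝ)^(-s) - 1)/s + 6 * (((2:ℝ)^(-(s/2)) - 1)/s)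
        + 3 * (((3:ℝ)^(-(s/2)) - 1)/s))/10)
      + ((((2:ℝ)^(-s) - 1)/s) + 4 * (((2:ℝ)^(-(s/2)) - 1)/s))/5
      = (1/s) * ((3/8:ℝ)^(s/2) - (2/5) * (2:ℝ)^(-(s/2)) - (3/5) * (3:ℝ)^(-(s/2))) := by
    field_simp
    ring
  linarith [h4, h5, h6, key.ge, key.le]
end

section
/- For every real s with -2 < s and s ≠ 0, the quantity (1/s)·( (3/8)^{s/2} - (2/5)·(1/2)^{s/2} - (3/5)·(1/3)^{s/2} ) is strictly negative; moreover its limit as s → 0 equals (1/10)·log(3⁸/2¹³), which is also strictly negative. -/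
open Real Filter

/-- tangent-chord bound: for `0 < c` and `t ∈ [0,1]`, `c ^ t ≤ 1 - t + t * c`. -/
lemma aux_rpow_chord (c t : ℝ) (hc : 0 < c) (ht0 : 0 ≤ t) (ht1 : t ≤ 1) :
    c ^ t ≤ 1 - t + t * c := by
  have h := convexOn_exp.2 (Set.mem_univ (0 : ℝ)) (Set.mem_univ (Real.log c))
      (by linarith : (0:ℝ) ≤ 1 - t) ht0 (by ring)
  rw [Real.rpow_def_of_pos hc]
  simpa [Real.exp_log hc, mul_comm] using h

lemma aux_key_pos (p : ℝ) (hp : 0 < p) :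
    (1 : ℝ) < (2/5) * (4/3 : ℝ) ^ p + (3/5) * (8/9 : ℝ) ^ p := by
  have h43 : (0:ℝ) < 4/3 := by norm_num
  have h89 : (0:ℝ) < 8/9 := by norm_num
  have hne : p * Real.log (4/3) ≠ p * Real.log (8/9) := by
    have : Real.log (8/9) < Real.log (4/3) := by
      apply Real.log_lt_log h89; norm_num
    intro h
    have := mul_left_cancel₀ (ne_of_gt hp) h
    linarith
  have h := strictConvexOn_exp.2 (Set.mem_univ (p * Real.log (4/3)))
      (Set.mem_univ (p * Real.log (8/9))) hne (by norm_num : (0:ℝ) < 2/5)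
      (by norm_num : (0:ℝ) < 3/5) (by norm_num)
  have r1 : (4/3 : ℝ) ^ p = Real.exp (p * Real.log (4/3)) := by
    rw [Real.rpow_def_of_pos h43, mul_comm]
  have r2 : (8/9 : ℝ) ^ p = Real.exp (p * Real.log (8/9)) := by
    rw [Real.rpow_def_of_pos h89, mul_comm]
  rw [r1, r2]
  have hc : (0:ℝ) < (2/5) * (p * Real.log (4/3)) + (3/5) * (p * Real.log (8/9)) := by
    have : 0 < 2 * Real.log (4/3) + 3 * Real.log (8/9) := by
      have e1 : Real.log ((4/3:ℝ)^(2:ℕ)) = 2 * Real.log (4/3) := by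
        rw [Real.log_pow]; push_cast; ring
      have e2 : Real.log ((8/9:ℝ)^(3:ℕ)) = 3 * Real.log (8/9) := by
        rw [Real.log_pow]; push_cast; ring
      have : 0 < Real.log ((4/3:ℝ)^(2:ℕ) * (8/9:ℝ)^(3:ℕ)) := by
        apply Real.log_pos; norm_num
      rwa [Real.log_mul (by positivity) (by positivity), e1, e2] at this
    nlinarith
  calc (1:ℝ) = Real.exp 0 := by simp
    _ < Real.exp ((2/5) * (p * Real.log (4/3)) + (3/5) * (p * Real.log (8/9))) :=
        Real.exp_lt_exp.2 hc
    _ < (2/5) * Real.exp (p * Real.log (4/3)) + (3/5) * Real.exp (p * Real.log (8/9)) := by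
        simpa [mul_comm] using h

lemma aux_key_neg (p : ℝ) (hp0 : -1 < p) (hp1 : p < 0) :
    (2/5) * (4/3 : ℝ) ^ p + (3/5) * (8/9 : ℝ) ^ p < 1 := by
  set t : ℝ := -p with ht
  have ht0 : 0 < t := by simp [ht]; linarith
  have ht1 : t ≤ 1 := by simp [ht]; linarith
  have e1 : (4/3 : ℝ) ^ p = (3/4 : ℝ) ^ t := by
    rw [ht, Real.rpow_neg (by norm_num), ← Real.inv_rpow (by norm_num)]
    norm_num
  have e2 : (8/9 : ℝ) ^ p = (9/8 : ℝ) ^ t := by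
    rw [ht, Real.rpow_neg (by norm_num), ← Real.inv_rpow (by norm_num)]
    norm_num
  have b1 := aux_rpow_chord (3/4) t (by norm_num) ht0.le ht1
  have b2 := aux_rpow_chord (9/8) t (by norm_num) ht0.le ht1
  rw [e1, e2]
  nlinarith

lemma aux_hd (c : ℝ) (hc : 0 < c) :
    HasDerivAt (fun s : ℝ => c ^ (s / 2)) (Real.log c / 2) 0 := by
  have heq : (fun s : ℝ => c ^ (s / 2)) = fun s : ℝ => Real.exp (Real.log c / 2 * s) := by
    funext s
    rw [Real.rpow_def_of_pos hc]
    ring_nf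
  rw [heq]
  have h1 : HasDerivAt (fun s : ℝ => Real.log c / 2 * s) (Real.log c / 2) 0 := by
    simpa using (hasDerivAt_id (0:ℝ)).const_mul (Real.log c / 2)
  simpa using h1.exp

theorem stmt19 :
    (∀ s : ℝ, -2 < s → s ≠ 0 →
      (1 / s) * ((3 / 8 : ℝ) ^ (s / 2) - (2 / 5) * (1 / 2 : ℝ) ^ (s / 2)
        - (3 / 5) * (1 / 3 : ℝ) ^ (s / 2)) < 0) ∧
    Filter.Tendsto (fun s : ℝ =>
        (1 / s) * ((3 / 8 : ℝ) ^ (s / 2) - (2 / 5) * (1 / 2 : ℝ) ^ (s / 2)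
          - (3 / 5) * (1 / 3 : ℝ) ^ (s / 2)))
      (nhdsWithin 0 {0}ᶜ) (nhds ((1 / 10) * Real.log ((3 ^ 8 : ℝ) / (2 ^ 13 : ℝ)))) ∧
    (1 / 10 : ℝ) * Real.log ((3 ^ 8 : ℝ) / (2 ^ 13 : ℝ)) < 0 := by
  have hlog : Real.log ((3 ^ 8 : ℝ) / (2 ^ 13 : ℝ)) = 8 * Real.log 3 - 13 * Real.log 2 := by
    rw [Real.log_div (by positivity) (by positivity), Real.log_pow, Real.log_pow]
    push_cast; ring
  -- relate the three rpow terms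
  have hsplit : ∀ p : ℝ, (1/2 : ℝ) ^ p = (3/8 : ℝ) ^ p * (4/3 : ℝ) ^ p ∧
      (1/3 : ℝ) ^ p = (3/8 : ℝ) ^ p * (8/9 : ℝ) ^ p := by
    intro p
    constructor
    · rw [← Real.mul_rpow (by norm_num) (by norm_num)]; norm_num
    · rw [← Real.mul_rpow (by norm_num) (by norm_num)]; norm_num
  refine ⟨?_, ?_, ?_⟩
  · intro s hs2 hs0
    obtain ⟨e1, e2⟩ := hsplit (s/2)
    have hb : (0:ℝ) < (3/8 : ℝ) ^ (s/2) := Real.rpow_pos_of_pos (by norm_num) _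
    rcases lt_or_gt_of_ne hs0 with hneg | hpos
    · -- s < 0 : expression is (neg)·(pos)
      have key := aux_key_neg (s/2) (by linarith) (by linarith)
      have hg : 0 < (3 / 8 : ℝ) ^ (s / 2) - (2 / 5) * (1 / 2 : ℝ) ^ (s / 2)
          - (3 / 5) * (1 / 3 : ℝ) ^ (s / 2) := by
        rw [e1, e2]; nlinarith
      have : 1 / s < 0 := by
        apply div_neg_of_pos_of_neg <;> linarith
      exact mul_neg_of_neg_of_pos this hg
    · have key := aux_key_pos (s/2) (by linarith)
      have hg : (3 / 8 : ℝ) ^ (s / 2) - (2 / 5) * (1 / 2 : ℝ) ^ (s / 2)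
          - (3 / 5) * (1 / 3 : ℝ) ^ (s / 2) < 0 := by
        rw [e1, e2]; nlinarith
      have : 0 < 1 / s := by positivity
      exact mul_neg_of_pos_of_neg this hg
  · -- the limit: derivative at 0
    set g : ℝ → ℝ := fun s => (3 / 8 : ℝ) ^ (s / 2) - (2 / 5) * (1 / 2 : ℝ) ^ (s / 2)
        - (3 / 5) * (1 / 3 : ℝ) ^ (s / 2) with hg
    have hd : HasDerivAt g ((1 / 10) * Real.log ((3 ^ 8 : ℝ) / (2 ^ 13 : ℝ))) 0 := by
      have h1 := aux_hd (3/8) (by norm_num)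
      have h2 := (aux_hd (1/2) (by norm_num)).const_mul (2/5 : ℝ)
      have h3 := (aux_hd (1/3) (by norm_num)).const_mul (3/5 : ℝ)
      have h := (h1.sub h2).sub h3
      refine h.congr_deriv ?_
      rw [hlog]
      have l1 : Real.log (3/8 : ℝ) = Real.log 3 - 3 * Real.log 2 := by
        rw [Real.log_div (by norm_num) (by norm_num),
          show (8:ℝ) = 2 ^ (3:ℕ) by norm_num, Real.log_pow]
        push_cast; ring
      have l2 : Real.log (1/2 : ℝ) = -Real.log 2 := by
        rw [Real.log_div (by norm_num) (by norm_num)]; simp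
      have l3 : Real.log (1/3 : ℝ) = -Real.log 3 := by
        rw [Real.log_div (by norm_num) (by norm_num)]; simp
      rw [l1, l2, l3]; ring
    have h0 : g 0 = 0 := by simp [hg]; norm_num
    have := hasDerivAt_iff_tendsto_slope.1 hd
    apply this.congr
    intro s
    rw [slope_def_field, h0, sub_zero, sub_zero]
    simp only [hg]
    ring
  · have h : Real.log ((3 ^ 8 : ℝ) / (2 ^ 13 : ℝ)) < 0 := by
      apply Real.log_neg <;> norm_num
    linarith
end
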